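/- arXiv:2212.08360 — 6 statements merged into one kernel-verified Lean document; each statement's English description precedes it below -/
import Mathlib

section
/- Let A, B be 2n×2n real invertible skew-symmetric matrices. Suppose {v₁,...,v_{2n}} is a symplectic basis for A (i.e. vᵢᵀ A v_j equals J_{i,j}) and {w₁,...,w_{2n}} is a symplectic basis for B, and suppose vᵢᵀ J v_j = wᵢᵀ J w_j for all i, j. Then there exists a symplectic matrix P (Pᵀ J P = J) with Pᵀ B P = A. -/
open Matrix

/-- The standard symplectic matrix `J` on `ℝ^{2n}`. -/
def stdJ (n : ℕ) : Matrix (Fin (2 * n)) (Fin (2 * n)) ℝ :=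
  Matrix.of fun i j =>
    if i.val + 1 = j.val ∧ i.val % 2 = 0 then 1
    else if j.val + 1 = i.val ∧ j.val % 2 = 0 then -1
    else 0

lemma sandwich_apply {m : ℕ} (M C : Matrix (Fin m) (Fin m) ℝ) (i j : Fin m) :
    (M * C * Mᵀ) i j = (fun k => M i k) ⬝ᵥ C *ᵥ (fun k => M j k) := by
  simp only [Matrix.mul_apply, Matrix.mulVec, dotProduct, Finset.mul_sum, Finset.sum_mul, Matrix.transpose_apply]
  rw [Finset.sum_comm]
  exact Finset.sum_congr rfl fun k _ => Finset.sum_congr rfl fun l _ => by ring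

/-- Equivalence Lemma in `ℝ^{2n}`: if `A` and `B` admit symplectic bases with equal
basis-values, then `A` and `B` are equivalent under the symplectic group action. -/
theorem equivalence_lemma (n : ℕ) (A B : Matrix (Fin (2 * n)) (Fin (2 * n)) ℝ)
    (hA : Aᵀ = -A) (hAdet : A.det ≠ 0) (hB : Bᵀ = -B) (hBdet : B.det ≠ 0)
    (v w : Fin (2 * n) → Fin (2 * n) → ℝ)
    (hv : LinearIndependent ℝ v) (hv' : Submodule.span ℝ (Set.range v) = ⊤)
    (hw : LinearIndependent ℝ w) (hw' : Submodule.span ℝ (Set.range w) = ⊤)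
    (hvA : ∀ i j, v i ⬝ᵥ A *ᵥ v j = stdJ n i j)
    (hwB : ∀ i j, w i ⬝ᵥ B *ᵥ w j = stdJ n i j)
    (hvals : ∀ i j, v i ⬝ᵥ (stdJ n) *ᵥ v j = w i ⬝ᵥ (stdJ n) *ᵥ w j) :
    ∃ P : Matrix (Fin (2 * n)) (Fin (2 * n)) ℝ,
      Pᵀ * stdJ n * P = stdJ n ∧ Pᵀ * B * P = A := by
  set J := stdJ n
  set M : Matrix (Fin (2 * n)) (Fin (2 * n)) ℝ := Matrix.of v with hM
  set N : Matrix (Fin (2 * n)) (Fin (2 * n)) ℝ := Matrix.of w with hN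
  have hMunit : IsUnit M := Matrix.linearIndependent_rows_iff_isUnit.1 hv
  have hNunit : IsUnit N := Matrix.linearIndependent_rows_iff_isUnit.1 hw
  have h1 : M * A * Mᵀ = J := by
    ext i j; rw [sandwich_apply]; exact hvA i j
  have h2 : N * B * Nᵀ = J := by
    ext i j; rw [sandwich_apply]; exact hwB i j
  have h3 : M * J * Mᵀ = N * J * Nᵀ := by
    ext i j; rw [sandwich_apply, sandwich_apply]; exact hvals i j
  refine ⟨Nᵀ * M⁻¹ᵀ, ?_, ?_⟩
  · have : (Nᵀ * M⁻¹ᵀ)ᵀ * J * (Nᵀ * M⁻¹ᵀ) = M⁻¹ * (N * J * Nᵀ) * M⁻¹ᵀ := by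
      simp [Matrix.transpose_mul, Matrix.mul_assoc]
    rw [this, ← h3]
    calc M⁻¹ * (M * J * Mᵀ) * M⁻¹ᵀ
        = (M⁻¹ * M) * J * (Mᵀ * M⁻¹ᵀ) := by simp [Matrix.mul_assoc]
      _ = J := by
          rw [Matrix.nonsing_inv_mul M ((Matrix.isUnit_iff_isUnit_det M).1 hMunit),
            ← Matrix.transpose_mul,
            Matrix.nonsing_inv_mul M ((Matrix.isUnit_iff_isUnit_det M).1 hMunit)]
          simp
  · have : (Nᵀ * M⁻¹ᵀ)ᵀ * B * (Nᵀ * M⁻¹ᵀ) = M⁻¹ * (N * B * Nᵀ) * M⁻¹ᵀ := by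
      simp [Matrix.transpose_mul, Matrix.mul_assoc]
    rw [this, h2, ← h1]
    calc M⁻¹ * (M * A * Mᵀ) * M⁻¹ᵀ
        = (M⁻¹ * M) * A * (Mᵀ * M⁻¹ᵀ) := by simp [Matrix.mul_assoc]
      _ = A := by
          rw [Matrix.nonsing_inv_mul M ((Matrix.isUnit_iff_isUnit_det M).1 hMunit),
            ← Matrix.transpose_mul,
            Matrix.nonsing_inv_mul M ((Matrix.isUnit_iff_isUnit_det M).1 hMunit)]
          simp
end

section
/- Let p > 0 and q ∈ ℝ. Any two 4×4 real skew-symmetric matrices A, B with Pf(A) = Pf(B) = p, s(A) = s(B) = q, and neither equal to √p·J nor -√p·J, are symplectically congruent: there exists P with Pᵀ J P = J and Pᵀ A P = B. -/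
open Matrix

/-- The standard 4×4 symplectic matrix. -/
def J4 : Matrix (Fin 4) (Fin 4) ℝ :=
  !![0, 1, 0, 0; -1, 0, 0, 0; 0, 0, 0, 1; 0, 0, -1, 0]

/-- Pfaffian of a 4×4 skew-symmetric matrix: `af - be + cd`. -/
def pf4 (A : Matrix (Fin 4) (Fin 4) ℝ) : ℝ :=
  A 0 1 * A 2 3 - A 0 2 * A 1 3 + A 0 3 * A 1 2

/-- Sum function of a 4×4 skew-symmetric matrix: `a + f`. -/
def s4 (A : Matrix (Fin 4) (Fin 4) ℝ) : ℝ :=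
  A 0 1 + A 2 3

abbrev Mat := Matrix (Fin 4) (Fin 4) ℝ

lemma J4T : J4ᵀ = -J4 := by
  ext i j; fin_cases i <;> fin_cases j <;>
    simp [J4, Matrix.neg_apply, vecHead, vecTail]

lemma J4sq : J4 * J4 = -1 := by
  ext i j; fin_cases i <;> fin_cases j <;>
    simp [J4, Matrix.mul_apply, Fin.sum_univ_four, Matrix.one_apply, vecHead, vecTail]

lemma BXe (S X Y : Mat) (k l : Fin 4) :
    (X *ᵥ Pi.single k 1) ⬝ᵥ S *ᵥ (Y *ᵥ Pi.single l 1) = (Xᵀ * S * Y) k l := by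
  rw [mulVec_mulVec, show X *ᵥ Pi.single k 1 = Pi.single k 1 ᵥ* Xᵀ from (vecMul_transpose _ _).symm,
    ← dotProduct_mulVec, mulVec_mulVec, ← Matrix.mul_assoc, single_one_dotProduct,
    mulVec_single_one]
  rfl

lemma skew_pair {S : Mat} (hS : Sᵀ = -S) (x y : Fin 4 → ℝ) :
    x ⬝ᵥ S *ᵥ y = -(y ⬝ᵥ S *ᵥ x) := by
  have h : S = -Sᵀ := by rw [hS, neg_neg]
  rw [dotProduct_mulVec]
  nth_rewrite 1 [h]
  rw [vecMul_neg, vecMul_transpose, neg_dotProduct, dotProduct_comm]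

lemma skew_self {S : Mat} (hS : Sᵀ = -S) (x : Fin 4 → ℝ) :
    x ⬝ᵥ S *ᵥ x = 0 := by
  have := skew_pair hS x x; linarith

lemma entry_lemma (X : Mat) (v : Fin 4 → Fin 4 → ℝ) (i j : Fin 4) :
    ((Matrix.of fun a b => v b a)ᵀ * X * (Matrix.of fun a b => v b a)) i j
      = v i ⬝ᵥ X *ᵥ v j := by
  simp [Matrix.mul_apply, Matrix.mulVec, dotProduct, Fin.sum_univ_four,
    Matrix.transpose_apply, Matrix.of_apply]
  ring

lemma gram {S T : Mat} (hS : Sᵀ = -S) (hT : Tᵀ = -T) (v : Fin 4 → Fin 4 → ℝ)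
    (h01 : v 0 ⬝ᵥ S *ᵥ v 1 = T 0 1) (h02 : v 0 ⬝ᵥ S *ᵥ v 2 = T 0 2)
    (h03 : v 0 ⬝ᵥ S *ᵥ v 3 = T 0 3) (h12 : v 1 ⬝ᵥ S *ᵥ v 2 = T 1 2)
    (h13 : v 1 ⬝ᵥ S *ᵥ v 3 = T 1 3) (h23 : v 2 ⬝ᵥ S *ᵥ v 3 = T 2 3) :
    (Matrix.of fun a b => v b a)ᵀ * S * (Matrix.of fun a b => v b a) = T := by
  have hTs : ∀ i j : Fin 4, T j i = -T i j := fun i j => by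
    have := congrFun (congrFun hT i) j
    simpa [Matrix.transpose_apply, Matrix.neg_apply] using this
  have hTd : ∀ i : Fin 4, T i i = 0 := fun i => by have := hTs i i; linarith
  have sp : ∀ x y, x ⬝ᵥ S *ᵥ y = -(y ⬝ᵥ S *ᵥ x) := fun x y => by
    have h : S = -Sᵀ := by rw [hS, neg_neg]
    rw [dotProduct_mulVec]
    nth_rewrite 1 [h]
    rw [vecMul_neg, vecMul_transpose, neg_dotProduct, dotProduct_comm]
  ext i j
  rw [entry_lemma]
  fin_cases i <;> fin_cases j
  · simpa [hTd 0] using by have := sp (v 0) (v 0); linarith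
  · exact h01
  · exact h02
  · exact h03
  · exact (sp (v 1) (v 0)).trans (by rw [h01, hTs 1 0, neg_neg]; rfl)
  · simpa [hTd 1] using by have := sp (v 1) (v 1); linarith
  · exact h12
  · exact h13
  · exact (sp (v 2) (v 0)).trans (by rw [h02, hTs 2 0, neg_neg]; rfl)
  · exact (sp (v 2) (v 1)).trans (by rw [h12, hTs 2 1, neg_neg]; rfl)
  · simpa [hTd 2] using by have := sp (v 2) (v 2); linarith
  · exact h23
  · exact (sp (v 3) (v 0)).trans (by rw [h03, hTs 3 0, neg_neg]; rfl)
  · exact (sp (v 3) (v 1)).trans (by rw [h13, hTs 3 1, neg_neg]; rfl)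
  · exact (sp (v 3) (v 2)).trans (by rw [h23, hTs 3 2, neg_neg]; rfl)
  · simpa [hTd 3] using by have := sp (v 3) (v 3); linarith

lemma skew_explicit {A : Mat} (hA : Aᵀ = -A) :
    A = !![0, A 0 1, A 0 2, A 0 3; -(A 0 1), 0, A 1 2, A 1 3;
          -(A 0 2), -(A 1 2), 0, A 2 3; -(A 0 3), -(A 1 3), -(A 2 3), 0] := by
  have hs : ∀ i j : Fin 4, A j i = -A i j := fun i j => by
    simpa using congrFun (congrFun hA i) j
  have hd : ∀ i : Fin 4, A i i = 0 := fun i => by have := hs i i; linarith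
  ext i j
  fin_cases i <;> fin_cases j <;>
    simp [vecHead, vecTail] <;>
    first
      | exact hd _
      | exact hs _ _

lemma quad_identity {A : Mat} (hA : Aᵀ = -A) :
    (-(J4 * A)) * (-(J4 * A)) = s4 A • (-(J4 * A)) - pf4 A • (1 : Mat) := by
  rw [skew_explicit hA]
  ext i j
  fin_cases i <;> fin_cases j <;>
    simp [J4, pf4, s4, Matrix.mul_apply, Fin.sum_univ_four, Matrix.smul_apply,
      Matrix.one_apply, Matrix.neg_apply, vecHead, vecTail, Matrix.sub_apply] <;>
    ring

def E3 : Mat := !![0,0,1,0; 0,0,0,-1; -1,0,0,0; 0,1,0,0]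

lemma E3T : E3ᵀ = -E3 := by
  ext i j; fin_cases i <;> fin_cases j <;> simp [E3, vecHead, vecTail]

lemma case2 (p q t : ℝ) (A M : Mat) (hA : Aᵀ = -A)
    (hJM : J4 * M = A) (hMJ : Mᵀ * J4 = J4 * M)
    (hM2 : M * M = q • M - p • (1 : Mat))
    (ht : 0 < t) (ht2 : t ^ 2 = 4 * p - q ^ 2) :
    ∃ P : Mat, Pᵀ * J4 * P = J4 ∧ Pᵀ * A * P = (q / 2) • J4 + (t / 2) • E3 := by
  have htne : t ≠ 0 := ne_of_gt ht
  set K : Mat := t⁻¹ • ((2 : ℝ) • M - q • (1 : Mat)) with hK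
  have hKT : Kᵀ * J4 = J4 * K := by
    rw [hK, Matrix.transpose_smul, Matrix.transpose_sub, Matrix.transpose_smul,
      Matrix.transpose_smul, Matrix.transpose_one, Matrix.smul_mul, Matrix.mul_smul,
      Matrix.sub_mul, Matrix.mul_sub, Matrix.smul_mul, Matrix.mul_smul,
      Matrix.smul_mul, Matrix.mul_smul, Matrix.one_mul, Matrix.mul_one, hMJ]
  have hK2 : K * K = -1 := by
    have inner : ((2:ℝ) • M - q • (1:Mat)) * ((2:ℝ) • M - q • (1:Mat))
        = (q^2 - 4*p) • (1 : Mat) := by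
      simp only [Matrix.sub_mul, Matrix.mul_sub, Matrix.smul_mul, Matrix.mul_smul,
        Matrix.one_mul, Matrix.mul_one, smul_smul]
      rw [hM2]
      have h4 : (2:ℝ) * 2 = 4 := by norm_num
      match_scalars <;> ring
    rw [hK, Matrix.smul_mul, Matrix.mul_smul, smul_smul, inner, smul_smul]
    have : t⁻¹ * t⁻¹ * (q ^ 2 - 4 * p) = -1 := by
      rw [show q^2 - 4*p = -t^2 by linarith]
      field_simp
    rw [this, neg_smul, one_smul]
  set G := J4 * K with hG
  have hGskew : Gᵀ = -G := by
    rw [hG, Matrix.transpose_mul, J4T, Matrix.mul_neg, hKT, hG]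
  have hGs : ∀ i j : Fin 4, G j i = -G i j := fun i j => by
    simpa using congrFun (congrFun hGskew i) j
  have hGK : G * K = -J4 := by
    rw [hG, Matrix.mul_assoc, hK2, Matrix.mul_neg, Matrix.mul_one]
  have hKTG : Kᵀ * G = -J4 := by
    rw [hG, ← Matrix.mul_assoc, hKT, Matrix.mul_assoc, hK2, Matrix.mul_neg,
      Matrix.mul_one]
  have hKt : t • K = (2:ℝ) • M - q • (1:Mat) := by
    rw [hK, smul_smul, mul_inv_cancel₀ htne, one_smul]
  have hMsplit : M = (q/2) • (1:Mat) + (t/2) • K := by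
    rw [show (t/2:ℝ) = (1/2) * t by ring, ← smul_smul, hKt]
    match_scalars <;> ring
  have hAsplit : A = (q/2) • J4 + (t/2) • G := by
    rw [← hJM, hG, hMsplit, Matrix.mul_add, Matrix.mul_smul, Matrix.mul_smul,
      Matrix.mul_one]
  set x0 := G 0 1 with hx0
  set d : ℝ := 1 + x0 ^ 2 with hd
  have hdpos : 0 < d := by positivity
  have hdne : d ≠ 0 := ne_of_gt hdpos
  set al : ℝ := d⁻¹ with hal
  set be : ℝ := x0 / d with hbe
  have key1 : al + be * x0 = 1 := by rw [hal, hbe, hd]; field_simp; try ring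
  have key2 : -be + al * x0 = 0 := by rw [hal, hbe]; field_simp; try ring
  set X₂ : Mat := al • (1:Mat) + be • K with hX2
  set X₃ : Mat := be • (1:Mat) + (-al) • K with hX3
  set X₄ : Mat := (0:ℝ) • (1:Mat) + (-1:ℝ) • K with hX4
  set v : Fin 4 → Fin 4 → ℝ :=
    ![(1:Mat) *ᵥ Pi.single 0 1, X₂ *ᵥ Pi.single 1 1,
      X₃ *ᵥ Pi.single 1 1, X₄ *ᵥ Pi.single 0 1] with hv
  have hv0 : v 0 = (1:Mat) *ᵥ Pi.single 0 1 := rfl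
  have hv1 : v 1 = X₂ *ᵥ Pi.single 1 1 := rfl
  have hv2 : v 2 = X₃ *ᵥ Pi.single 1 1 := rfl
  have hv3 : v 3 = X₄ *ᵥ Pi.single 0 1 := rfl
  have mulXY : ∀ a b cc e : ℝ, (a • J4 + b • G) * (cc • (1:Mat) + e • K)
      = (a*cc - b*e) • J4 + (a*e + b*cc) • G := by
    intro a b cc e
    simp only [Matrix.add_mul, Matrix.mul_add, Matrix.smul_mul, Matrix.mul_smul,
      Matrix.mul_one, smul_smul]
    rw [show J4 * K = G from hG.symm, hGK]
    match_scalars <;> ring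
  have entryJG : ∀ (a b : ℝ) (i j : Fin 4), (a • J4 + b • G) i j
      = a * J4 i j + b * G i j := by
    intro a b i j
    simp [Matrix.add_apply, Matrix.smul_apply]
  have hX2T : X₂ᵀ * J4 = al • J4 + be • G := by
    rw [hX2, Matrix.transpose_add, Matrix.transpose_smul, Matrix.transpose_smul,
      Matrix.transpose_one, Matrix.add_mul, Matrix.smul_mul, Matrix.smul_mul,
      Matrix.one_mul, hKT]
  have hX3T : X₃ᵀ * J4 = be • J4 + (-al) • G := by
    rw [hX3, Matrix.transpose_add, Matrix.transpose_smul, Matrix.transpose_smul,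
      Matrix.transpose_one, Matrix.add_mul, Matrix.smul_mul, Matrix.smul_mul,
      Matrix.one_mul, hKT]
  have hX2TG : X₂ᵀ * G = (-be) • J4 + al • G := by
    rw [hX2, Matrix.transpose_add, Matrix.transpose_smul, Matrix.transpose_smul,
      Matrix.transpose_one, Matrix.add_mul, Matrix.smul_mul, Matrix.smul_mul,
      Matrix.one_mul, hKTG, smul_neg]
    match_scalars <;> ring
  have hX3TG : X₃ᵀ * G = al • J4 + be • G := by
    rw [hX3, Matrix.transpose_add, Matrix.transpose_smul, Matrix.transpose_smul,
      Matrix.transpose_one, Matrix.add_mul, Matrix.smul_mul, Matrix.smul_mul,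
      Matrix.one_mul, hKTG, smul_neg]
    match_scalars <;> ring
  have hJ4W : (1:Mat)ᵀ * J4 = (1:ℝ) • J4 + (0:ℝ) • G := by
    rw [Matrix.transpose_one, Matrix.one_mul]
    match_scalars <;> ring
  have hGW : (1:Mat)ᵀ * G = (0:ℝ) • J4 + (1:ℝ) • G := by
    rw [Matrix.transpose_one, Matrix.one_mul]
    match_scalars <;> ring
  have eJ00 : J4 0 0 = 0 := by simp [J4]
  have eJ01 : J4 0 1 = 1 := by simp [J4]
  have eJ10 : J4 1 0 = -1 := by simp [J4]
  have eJ11 : J4 1 1 = 0 := by simp [J4]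
  have eG10 : G 1 0 = -x0 := by rw [hGs 0 1]
  have eG00 : G 0 0 = 0 := by have := hGs 0 0; linarith
  have eG11 : G 1 1 = 0 := by have := hGs 1 1; linarith
  -- J-facts
  have fJ01 : v 0 ⬝ᵥ J4 *ᵥ v 1 = J4 0 1 := by
    rw [hv0, hv1, BXe, hJ4W, hX2, mulXY, entryJG, eJ01, ← hx0]
    linarith [key1]
  have fJ02 : v 0 ⬝ᵥ J4 *ᵥ v 2 = J4 0 2 := by
    rw [hv0, hv2, BXe, hJ4W, hX3, mulXY, entryJG, eJ01, ← hx0,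
      show J4 0 2 = 0 by simp [J4]]
    linarith [key2]
  have fJ03 : v 0 ⬝ᵥ J4 *ᵥ v 3 = J4 0 3 := by
    rw [hv0, hv3, BXe, hJ4W, hX4, mulXY, entryJG, eJ00, eG00,
      show J4 0 3 = 0 by simp [J4]]
    ring
  have fJ12 : v 1 ⬝ᵥ J4 *ᵥ v 2 = J4 1 2 := by
    rw [hv1, hv2, BXe, hX2T, hX3, mulXY, entryJG, eJ11, eG11,
      show J4 1 2 = 0 by simp [J4]]
    ring
  have fJ13 : v 1 ⬝ᵥ J4 *ᵥ v 3 = J4 1 3 := by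
    rw [hv1, hv3, BXe, hX2T, hX4, mulXY, entryJG, eJ10, eG10,
      show J4 1 3 = 0 by simp [J4]]
    linarith [key2]
  have fJ23 : v 2 ⬝ᵥ J4 *ᵥ v 3 = J4 2 3 := by
    rw [hv2, hv3, BXe, hX3T, hX4, mulXY, entryJG, eJ10, eG10,
      show J4 2 3 = 1 by simp [J4]]
    linarith [key1]
  -- G-facts
  have fG01 : v 0 ⬝ᵥ G *ᵥ v 1 = E3 0 1 := by
    rw [hv0, hv1, BXe, hGW, hX2, mulXY, entryJG, eJ01, ← hx0,
      show E3 0 1 = 0 by simp [E3]]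
    linarith [key2]
  have fG02 : v 0 ⬝ᵥ G *ᵥ v 2 = E3 0 2 := by
    rw [hv0, hv2, BXe, hGW, hX3, mulXY, entryJG, eJ01, ← hx0,
      show E3 0 2 = 1 by simp [E3]]
    linarith [key1]
  have fG03 : v 0 ⬝ᵥ G *ᵥ v 3 = E3 0 3 := by
    rw [hv0, hv3, BXe, hGW, hX4, mulXY, entryJG, eJ00, eG00,
      show E3 0 3 = 0 by simp [E3]]
    ring
  have fG12 : v 1 ⬝ᵥ G *ᵥ v 2 = E3 1 2 := by
    rw [hv1, hv2, BXe, hX2TG, hX3, mulXY, entryJG, eJ11, eG11,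
      show E3 1 2 = 0 by simp [E3]]
    ring
  have fG13 : v 1 ⬝ᵥ G *ᵥ v 3 = E3 1 3 := by
    rw [hv1, hv3, BXe, hX2TG, hX4, mulXY, entryJG, eJ10, eG10,
      show E3 1 3 = -1 by simp [E3]]
    linarith [key1]
  have fG23 : v 2 ⬝ᵥ G *ᵥ v 3 = E3 2 3 := by
    rw [hv2, hv3, BXe, hX3TG, hX4, mulXY, entryJG, eJ10, eG10,
      show E3 2 3 = 0 by simp [E3]]
    linarith [key2]
  -- assemble
  set C : Mat := (q/2) • J4 + (t/2) • E3 with hC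
  have hCskew : Cᵀ = -C := by
    rw [hC, Matrix.transpose_add, Matrix.transpose_smul, Matrix.transpose_smul,
      J4T, E3T, smul_neg, smul_neg]
    abel
  have hACsplit : ∀ (x y : Fin 4 → ℝ) (i j : Fin 4),
      x ⬝ᵥ J4 *ᵥ y = J4 i j → x ⬝ᵥ G *ᵥ y = E3 i j → x ⬝ᵥ A *ᵥ y = C i j := by
    intro x y i j h1 h2
    rw [hAsplit, Matrix.add_mulVec, Matrix.smul_mulVec,
      Matrix.smul_mulVec, dotProduct_add, dotProduct_smul, dotProduct_smul,
      smul_eq_mul, smul_eq_mul, h1, h2, hC, Matrix.add_apply, Matrix.smul_apply,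
      Matrix.smul_apply, smul_eq_mul, smul_eq_mul]
  exact ⟨Matrix.of fun a b => v b a,
    gram J4T J4T v fJ01 fJ02 fJ03 fJ12 fJ13 fJ23,
    gram hA hCskew v
      (hACsplit _ _ 0 1 fJ01 fG01) (hACsplit _ _ 0 2 fJ02 fG02)
      (hACsplit _ _ 0 3 fJ03 fG03) (hACsplit _ _ 1 2 fJ12 fG12)
      (hACsplit _ _ 1 3 fJ13 fG13) (hACsplit _ _ 2 3 fJ23 fG23)⟩

def E2 : Mat := !![0,0,1,0;0,0,0,0;-1,0,0,0;0,0,0,0]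

lemma E2T : E2ᵀ = -E2 := by
  ext i j; fin_cases i <;> fin_cases j <;> simp [E2, vecHead, vecTail]

lemma case3 (p q : ℝ) (A M : Mat) (hA : Aᵀ = -A)
    (hJM : J4 * M = A) (hMJ : Mᵀ * J4 = J4 * M)
    (hM2 : M * M = q • M - p • (1 : Mat))
    (hq : q ^ 2 = 4 * p) (hMne : M ≠ (q / 2) • (1 : Mat)) :
    ∃ P : Mat, Pᵀ * J4 * P = J4 ∧ Pᵀ * A * P = (q / 2) • J4 + E2 := by
  set lam := q / 2 with hlam
  set N := M - lam • (1 : Mat) with hNdef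
  have hNne : N ≠ 0 := by
    intro h
    apply hMne
    have := sub_eq_zero.mp h
    exact this
  have hNT : Nᵀ * J4 = J4 * N := by
    rw [hNdef]
    rw [Matrix.transpose_sub, Matrix.transpose_smul, Matrix.transpose_one,
      Matrix.sub_mul, Matrix.mul_sub, hMJ, Matrix.smul_mul, Matrix.mul_smul,
      Matrix.one_mul, Matrix.mul_one]
  have hN2 : N * N = 0 := by
    have expand : N * N = M * M - lam • M - lam • M + (lam * lam) • (1 : Mat) := by
      rw [hNdef]
      simp only [Matrix.sub_mul, Matrix.mul_sub, Matrix.smul_mul, Matrix.mul_smul,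
        Matrix.one_mul, Matrix.mul_one, smul_smul]
      module
    rw [expand, hM2, hlam]
    have hpq : p = (q/2) * (q/2) := by nlinarith
    rw [hpq]
    module
  set G := J4 * N with hGdef
  have hGskew : Gᵀ = -G := by
    rw [hGdef, Matrix.transpose_mul, J4T, Matrix.mul_neg, hNT, hGdef]
  have hGN : G * N = 0 := by rw [hGdef, Matrix.mul_assoc, hN2, Matrix.mul_zero]
  have hNTG : Nᵀ * G = 0 := by
    rw [hGdef, ← Matrix.mul_assoc, hNT, Matrix.mul_assoc, hN2, Matrix.mul_zero]
  have hGs : ∀ i j : Fin 4, G j i = -G i j := fun i j => by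
    simpa using congrFun (congrFun hGskew i) j
  have hGne : G ≠ 0 := by
    intro h
    apply hNne
    have : J4 * G = -N := by rw [hGdef, ← Matrix.mul_assoc, J4sq, neg_one_mul]
    rw [h, Matrix.mul_zero] at this
    simpa using this.symm
  obtain ⟨k, l, hc⟩ : ∃ k l : Fin 4, G k l ≠ 0 := by
    by_contra h
    push_neg at h
    exact hGne (by ext i j; simpa using h i j)
  set c := G k l with hcdef
  set θ := -(J4 k l) / c with hθ
  set X₂ : Mat := c⁻¹ • N with hX2
  set X₃ : Mat := c⁻¹ • (1 : Mat) + (c⁻¹ * θ) • N with hX3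
  set X₄ : Mat := -N with hX4
  set v : Fin 4 → Fin 4 → ℝ :=
    ![(1:Mat) *ᵥ Pi.single k 1, X₂ *ᵥ Pi.single l 1, X₃ *ᵥ Pi.single l 1, X₄ *ᵥ Pi.single k 1]
    with hv
  have hv0 : v 0 = (1:Mat) *ᵥ Pi.single k 1 := rfl
  have hv1 : v 1 = X₂ *ᵥ Pi.single l 1 := rfl
  have hv2 : v 2 = X₃ *ᵥ Pi.single l 1 := rfl
  have hv3 : v 3 = X₄ *ᵥ Pi.single k 1 := rfl
  -- J-gram matrix identities
  have mJ01 : (1:Mat)ᵀ * J4 * X₂ = c⁻¹ • G := by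
    rw [hX2, Matrix.transpose_one, Matrix.one_mul, Matrix.mul_smul, hGdef]
  have mJ02 : (1:Mat)ᵀ * J4 * X₃ = c⁻¹ • J4 + (c⁻¹ * θ) • G := by
    rw [hX3, Matrix.transpose_one, Matrix.one_mul, Matrix.mul_add,
      Matrix.mul_smul, Matrix.mul_smul, Matrix.mul_one, hGdef]
  have mJ03 : (1:Mat)ᵀ * J4 * X₄ = -G := by
    rw [hX4, Matrix.transpose_one, Matrix.one_mul, Matrix.mul_neg, hGdef]
  have hX2J : X₂ᵀ * J4 = c⁻¹ • G := by
    rw [hX2, Matrix.transpose_smul, Matrix.smul_mul, hNT, hGdef]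
  have mJ12 : X₂ᵀ * J4 * X₃ = (c⁻¹ * c⁻¹) • G := by
    rw [hX2J, hX3, Matrix.smul_mul, Matrix.mul_add, Matrix.mul_smul, Matrix.mul_smul,
      Matrix.mul_one, hGN, smul_zero, add_zero, smul_smul]
  have mJ13 : X₂ᵀ * J4 * X₄ = 0 := by
    rw [hX2J, hX4, Matrix.smul_mul, Matrix.mul_neg, hGN, neg_zero, smul_zero]
  have hX3J : X₃ᵀ * J4 = c⁻¹ • J4 + (c⁻¹ * θ) • G := by
    rw [hX3, Matrix.transpose_add, Matrix.transpose_smul, Matrix.transpose_smul,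
      Matrix.transpose_one, Matrix.add_mul, Matrix.smul_mul, Matrix.smul_mul,
      Matrix.one_mul, hNT, hGdef]
  have mJ23 : X₃ᵀ * J4 * X₄ = -(c⁻¹ • G) := by
    rw [hX3J, hX4, Matrix.add_mul, Matrix.smul_mul, Matrix.smul_mul, Matrix.mul_neg,
      Matrix.mul_neg, hGN, neg_zero, smul_zero, add_zero, hGdef, smul_neg]
  -- G-gram matrix identities
  have mG01 : (1:Mat)ᵀ * G * X₂ = 0 := by
    rw [hX2, Matrix.transpose_one, Matrix.one_mul, Matrix.mul_smul, hGN, smul_zero]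
  have mG02 : (1:Mat)ᵀ * G * X₃ = c⁻¹ • G := by
    rw [hX3, Matrix.transpose_one, Matrix.one_mul, Matrix.mul_add,
      Matrix.mul_smul, Matrix.mul_smul, Matrix.mul_one, hGN, smul_zero, add_zero]
  have mG03 : (1:Mat)ᵀ * G * X₄ = 0 := by
    rw [hX4, Matrix.transpose_one, Matrix.one_mul, Matrix.mul_neg, hGN, neg_zero]
  have hX2G : X₂ᵀ * G = 0 := by
    rw [hX2, Matrix.transpose_smul, Matrix.smul_mul, hNTG, smul_zero]
  have mG12 : X₂ᵀ * G * X₃ = 0 := by rw [hX2G, Matrix.zero_mul]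
  have mG13 : X₂ᵀ * G * X₄ = 0 := by rw [hX2G, Matrix.zero_mul]
  have mG23 : X₃ᵀ * G * X₄ = 0 := by
    rw [hX3, Matrix.transpose_add, Matrix.transpose_smul, Matrix.transpose_smul,
      Matrix.transpose_one, Matrix.add_mul, Matrix.smul_mul, Matrix.smul_mul,
      Matrix.one_mul, hNTG, smul_zero, add_zero, hX4, Matrix.mul_neg,
      Matrix.smul_mul, hGN, smul_zero, neg_zero]
  -- scalar facts for J4
  have hJkl : J4 k l + θ * c = 0 := by rw [hθ]; field_simp; ring
  have fJ01 : v 0 ⬝ᵥ J4 *ᵥ v 1 = J4 0 1 := by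
    rw [hv0, hv1, BXe, mJ01, Matrix.smul_apply, smul_eq_mul]
    rw [show J4 0 1 = 1 by simp [J4]]
    field_simp
    rfl
  have fJ02 : v 0 ⬝ᵥ J4 *ᵥ v 2 = J4 0 2 := by
    rw [hv0, hv2, BXe, mJ02, Matrix.add_apply, Matrix.smul_apply, Matrix.smul_apply,
      smul_eq_mul, smul_eq_mul]
    rw [show J4 0 2 = 0 by simp [J4], hθ]
    field_simp
    rw [← hcdef]
    ring
  have fJ03 : v 0 ⬝ᵥ J4 *ᵥ v 3 = J4 0 3 := by
    rw [hv0, hv3, BXe, mJ03, Matrix.neg_apply]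
    have : G k k = 0 := by have := hGs k k; linarith
    rw [this, show J4 0 3 = 0 by simp [J4]]
    ring
  have fJ12 : v 1 ⬝ᵥ J4 *ᵥ v 2 = J4 1 2 := by
    rw [hv1, hv2, BXe, mJ12, Matrix.smul_apply, smul_eq_mul]
    have : G l l = 0 := by have := hGs l l; linarith
    rw [this, show J4 1 2 = 0 by simp [J4]]
    ring
  have fJ13 : v 1 ⬝ᵥ J4 *ᵥ v 3 = J4 1 3 := by
    rw [hv1, hv3, BXe, mJ13, Matrix.zero_apply,
      show J4 1 3 = 0 by simp [J4]]
  have fJ23 : v 2 ⬝ᵥ J4 *ᵥ v 3 = J4 2 3 := by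
    rw [hv2, hv3, BXe, mJ23, Matrix.neg_apply, Matrix.smul_apply, smul_eq_mul]
    rw [hGs k l, show J4 2 3 = 1 by simp [J4]]
    field_simp
    rfl
  -- scalar facts for A: A = lam • J4 + G
  have hAG : A = lam • J4 + G := by
    rw [hGdef, hNdef, Matrix.mul_sub, Matrix.mul_smul, Matrix.mul_one, hJM]
    abel
  set C := lam • J4 + E2 with hC
  have hCskew : Cᵀ = -C := by
    rw [hC, Matrix.transpose_add, Matrix.transpose_smul, J4T, E2T, smul_neg]
    abel
  have hACsplit : ∀ (x y : Fin 4 → ℝ) (i j : Fin 4),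
      x ⬝ᵥ J4 *ᵥ y = J4 i j → x ⬝ᵥ G *ᵥ y = E2 i j → x ⬝ᵥ A *ᵥ y = C i j := by
    intro x y i j h1 h2
    rw [hAG, Matrix.add_mulVec, Matrix.smul_mulVec, dotProduct_add,
      dotProduct_smul, smul_eq_mul, h1, h2, hC, Matrix.add_apply, Matrix.smul_apply,
      smul_eq_mul]
  have fG01 : v 0 ⬝ᵥ G *ᵥ v 1 = E2 0 1 := by
    rw [hv0, hv1, BXe, mG01, Matrix.zero_apply, show E2 0 1 = 0 by simp [E2]]
  have fG02 : v 0 ⬝ᵥ G *ᵥ v 2 = E2 0 2 := by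
    rw [hv0, hv2, BXe, mG02, Matrix.smul_apply, smul_eq_mul,
      show E2 0 2 = 1 by simp [E2]]
    field_simp
    rfl
  have fG03 : v 0 ⬝ᵥ G *ᵥ v 3 = E2 0 3 := by
    rw [hv0, hv3, BXe, mG03, Matrix.zero_apply, show E2 0 3 = 0 by simp [E2]]
  have fG12 : v 1 ⬝ᵥ G *ᵥ v 2 = E2 1 2 := by
    rw [hv1, hv2, BXe, mG12, Matrix.zero_apply, show E2 1 2 = 0 by simp [E2]]
  have fG13 : v 1 ⬝ᵥ G *ᵥ v 3 = E2 1 3 := by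
    rw [hv1, hv3, BXe, mG13, Matrix.zero_apply, show E2 1 3 = 0 by simp [E2]]
  have fG23 : v 2 ⬝ᵥ G *ᵥ v 3 = E2 2 3 := by
    rw [hv2, hv3, BXe, mG23, Matrix.zero_apply, show E2 2 3 = 0 by simp [E2]]
  refine ⟨Matrix.of fun a b => v b a, ?_, ?_⟩
  · exact gram J4T J4T v fJ01 fJ02 fJ03 fJ12 fJ13 fJ23
  · exact gram hA hCskew v
      (hACsplit _ _ 0 1 fJ01 fG01) (hACsplit _ _ 0 2 fJ02 fG02)
      (hACsplit _ _ 0 3 fJ03 fG03) (hACsplit _ _ 1 2 fJ12 fG12)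
      (hACsplit _ _ 1 3 fJ13 fG13) (hACsplit _ _ 2 3 fJ23 fG23)

lemma case1 (p q r : ℝ) (A M : Mat) (hA : Aᵀ = -A)
    (hJM : J4 * M = A) (hMJ : Mᵀ * J4 = J4 * M)
    (hM2 : M * M = q • M - p • (1 : Mat))
    (hr : 0 < r) (hr2 : r ^ 2 = q ^ 2 - 4 * p)
    (hMl : M ≠ ((q + r) / 2) • (1 : Mat)) (hMm : M ≠ ((q - r) / 2) • (1 : Mat)) :
    ∃ P : Mat, Pᵀ * J4 * P = J4 ∧
      Pᵀ * A * P = !![0, (q+r)/2, 0, 0; -((q+r)/2), 0, 0, 0;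
                      0, 0, 0, (q-r)/2; 0, 0, -((q-r)/2), 0] := by
  set lam := (q + r) / 2 with hlam
  set mu := (q - r) / 2 with hmu
  have hrne : r ≠ 0 := ne_of_gt hr
  have hqs : q = lam + mu := by rw [hlam, hmu]; ring
  have hps : p = lam * mu := by rw [hlam, hmu]; nlinarith
  have hM2' : M * M = (lam + mu) • M - (lam * mu) • (1 : Mat) := by
    rw [hM2, hqs, hps]
  set Ql : Mat := M - mu • (1 : Mat) with hQl
  set Qm : Mat := lam • (1 : Mat) - M with hQm
  have hQlne : Ql ≠ 0 := by
    intro h; exact hMm (by rw [hmu] at *; exact sub_eq_zero.mp h)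
  have hQmne : Qm ≠ 0 := by
    intro h; exact hMl (by rw [hlam] at *; exact (sub_eq_zero.mp h).symm)
  have hQlT : Qlᵀ * J4 = J4 * Ql := by
    rw [hQl, Matrix.transpose_sub, Matrix.transpose_smul, Matrix.transpose_one,
      Matrix.sub_mul, Matrix.mul_sub, hMJ, Matrix.smul_mul, Matrix.mul_smul,
      Matrix.one_mul, Matrix.mul_one]
  have hQmT : Qmᵀ * J4 = J4 * Qm := by
    rw [hQm, Matrix.transpose_sub, Matrix.transpose_smul, Matrix.transpose_one,
      Matrix.sub_mul, Matrix.mul_sub, hMJ, Matrix.smul_mul, Matrix.mul_smul,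
      Matrix.one_mul, Matrix.mul_one]
  have hlm : Ql * Qm = 0 := by
    rw [hQl, hQm]
    simp only [Matrix.sub_mul, Matrix.mul_sub, Matrix.smul_mul, Matrix.mul_smul,
      Matrix.one_mul, Matrix.mul_one, smul_smul]
    rw [hM2']
    module
  have hml : Qm * Ql = 0 := by
    rw [hQl, hQm]
    simp only [Matrix.sub_mul, Matrix.mul_sub, Matrix.smul_mul, Matrix.mul_smul,
      Matrix.one_mul, Matrix.mul_one, smul_smul]
    rw [hM2']
    module
  have hQl2 : Ql * Ql = r • Ql := by
    rw [hQl]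
    simp only [Matrix.sub_mul, Matrix.mul_sub, Matrix.smul_mul, Matrix.mul_smul,
      Matrix.one_mul, Matrix.mul_one, smul_smul, smul_sub]
    rw [hM2']
    have : r = lam - mu := by rw [hlam, hmu]; ring
    rw [this]
    module
  have hQm2 : Qm * Qm = r • Qm := by
    rw [hQm]
    simp only [Matrix.sub_mul, Matrix.mul_sub, Matrix.smul_mul, Matrix.mul_smul,
      Matrix.one_mul, Matrix.mul_one, smul_smul, smul_sub]
    rw [hM2']
    have : r = lam - mu := by rw [hlam, hmu]; ring
    rw [this]
    module
  have hMQl : M * Ql = lam • Ql := by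
    rw [hQl]
    simp only [Matrix.mul_sub, Matrix.mul_smul, Matrix.mul_one, smul_sub,
      smul_smul]
    rw [hM2']
    module
  have hMQm : M * Qm = mu • Qm := by
    rw [hQm]
    simp only [Matrix.mul_sub, Matrix.mul_smul, Matrix.mul_one, smul_sub,
      smul_smul]
    rw [hM2']
    module
  have hAQl : A * Ql = lam • (J4 * Ql) := by
    rw [← hJM, Matrix.mul_assoc, hMQl, Matrix.mul_smul]
  have hAQm : A * Qm = mu • (J4 * Qm) := by
    rw [← hJM, Matrix.mul_assoc, hMQm, Matrix.mul_smul]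
  set Gl := J4 * Ql with hGl
  set Gm := J4 * Qm with hGm
  have hGlskew : Glᵀ = -Gl := by
    rw [hGl, Matrix.transpose_mul, J4T, Matrix.mul_neg, hQlT, hGl]
  have hGmskew : Gmᵀ = -Gm := by
    rw [hGm, Matrix.transpose_mul, J4T, Matrix.mul_neg, hQmT, hGm]
  have hGls : ∀ i j : Fin 4, Gl j i = -Gl i j := fun i j => by
    simpa using congrFun (congrFun hGlskew i) j
  have hGms : ∀ i j : Fin 4, Gm j i = -Gm i j := fun i j => by
    simpa using congrFun (congrFun hGmskew i) j
  have hGlne : Gl ≠ 0 := by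
    intro h
    apply hQlne
    have : J4 * Gl = -Ql := by rw [hGl, ← Matrix.mul_assoc, J4sq, neg_one_mul]
    rw [h, Matrix.mul_zero] at this
    simpa using this.symm
  have hGmne : Gm ≠ 0 := by
    intro h
    apply hQmne
    have : J4 * Gm = -Qm := by rw [hGm, ← Matrix.mul_assoc, J4sq, neg_one_mul]
    rw [h, Matrix.mul_zero] at this
    simpa using this.symm
  obtain ⟨k, l, hc⟩ : ∃ k l : Fin 4, Gl k l ≠ 0 := by
    by_contra h; push_neg at h
    exact hGlne (by ext i j; simpa using h i j)
  obtain ⟨k', l', hc'⟩ : ∃ k l : Fin 4, Gm k l ≠ 0 := by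
    by_contra h; push_neg at h
    exact hGmne (by ext i j; simpa using h i j)
  set c := Gl k l with hcdef
  set c' := Gm k' l' with hcdef'
  -- matrix identities
  have nJll : Qlᵀ * J4 * Ql = r • Gl := by
    rw [hQlT, hGl, Matrix.mul_assoc, hQl2, Matrix.mul_smul, ← hGl]
  have nJmm : Qmᵀ * J4 * Qm = r • Gm := by
    rw [hQmT, hGm, Matrix.mul_assoc, hQm2, Matrix.mul_smul, ← hGm]
  have nJlm : Qlᵀ * J4 * Qm = 0 := by
    rw [hQlT, hGl, Matrix.mul_assoc, hlm, Matrix.mul_zero]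
  have nJml : Qmᵀ * J4 * Ql = 0 := by
    rw [hQmT, hGm, Matrix.mul_assoc, hml, Matrix.mul_zero]
  have nAll : Qlᵀ * A * Ql = (lam * r) • Gl := by
    rw [Matrix.mul_assoc, hAQl, Matrix.mul_smul, ← Matrix.mul_assoc, hQlT, hGl,
      Matrix.mul_assoc, hQl2, Matrix.mul_smul, smul_smul, ← hGl]
  have nAmm : Qmᵀ * A * Qm = (mu * r) • Gm := by
    rw [Matrix.mul_assoc, hAQm, Matrix.mul_smul, ← Matrix.mul_assoc, hQmT, hGm,
      Matrix.mul_assoc, hQm2, Matrix.mul_smul, smul_smul, ← hGm]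
  have nAlm : Qlᵀ * A * Qm = 0 := by
    rw [Matrix.mul_assoc, hAQm, Matrix.mul_smul, ← Matrix.mul_assoc, hQlT, hGl,
      Matrix.mul_assoc, hlm, Matrix.mul_zero, smul_zero]
  have nAml : Qmᵀ * A * Ql = 0 := by
    rw [Matrix.mul_assoc, hAQl, Matrix.mul_smul, ← Matrix.mul_assoc, hQmT, hGm,
      Matrix.mul_assoc, hml, Matrix.mul_zero, smul_zero]
  -- vectors
  set s : ℝ := (r * c)⁻¹ with hs
  set s' : ℝ := (r * c')⁻¹ with hs'
  set v : Fin 4 → Fin 4 → ℝ :=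
    ![Ql *ᵥ Pi.single k 1, (s • Ql) *ᵥ Pi.single l 1,
      Qm *ᵥ Pi.single k' 1, (s' • Qm) *ᵥ Pi.single l' 1] with hv
  have hv0 : v 0 = Ql *ᵥ Pi.single k 1 := rfl
  have hv1 : v 1 = (s • Ql) *ᵥ Pi.single l 1 := rfl
  have hv2 : v 2 = Qm *ᵥ Pi.single k' 1 := rfl
  have hv3 : v 3 = (s' • Qm) *ᵥ Pi.single l' 1 := rfl
  set C : Mat := !![0, lam, 0, 0; -lam, 0, 0, 0;
                    0, 0, 0, mu; 0, 0, -mu, 0] with hC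
  have hCskew : Cᵀ = -C := by
    rw [hC]; ext i j; fin_cases i <;> fin_cases j <;> simp [vecHead, vecTail]
  have fJ01 : v 0 ⬝ᵥ J4 *ᵥ v 1 = J4 0 1 := by
    rw [hv0, hv1, BXe, Matrix.mul_smul, nJll, smul_smul, Matrix.smul_apply,
      smul_eq_mul, ← hcdef, hs, show J4 0 1 = 1 by simp [J4]]
    field_simp
  have fJ02 : v 0 ⬝ᵥ J4 *ᵥ v 2 = J4 0 2 := by
    rw [hv0, hv2, BXe, nJlm, Matrix.zero_apply,
      show J4 0 2 = 0 by simp [J4]]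
  have fJ03 : v 0 ⬝ᵥ J4 *ᵥ v 3 = J4 0 3 := by
    rw [hv0, hv3, BXe, Matrix.mul_smul, nJlm, smul_zero, Matrix.zero_apply,
      show J4 0 3 = 0 by simp [J4]]
  have fJ12 : v 1 ⬝ᵥ J4 *ᵥ v 2 = J4 1 2 := by
    rw [hv1, hv2, BXe, Matrix.transpose_smul, Matrix.smul_mul, Matrix.smul_mul,
      nJlm, smul_zero, Matrix.zero_apply,
      show J4 1 2 = 0 by simp [J4]]
  have fJ13 : v 1 ⬝ᵥ J4 *ᵥ v 3 = J4 1 3 := by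
    rw [hv1, hv3, BXe, Matrix.transpose_smul, Matrix.smul_mul, Matrix.smul_mul,
      Matrix.mul_smul, nJlm, smul_zero, smul_zero, Matrix.zero_apply,
      show J4 1 3 = 0 by simp [J4]]
  have fJ23 : v 2 ⬝ᵥ J4 *ᵥ v 3 = J4 2 3 := by
    rw [hv2, hv3, BXe, Matrix.mul_smul, nJmm, smul_smul, Matrix.smul_apply,
      smul_eq_mul, ← hcdef', hs', show J4 2 3 = 1 by simp [J4]]
    field_simp
  have fA01 : v 0 ⬝ᵥ A *ᵥ v 1 = C 0 1 := by
    rw [hv0, hv1, BXe, Matrix.mul_smul, nAll, smul_smul, Matrix.smul_apply,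
      smul_eq_mul, ← hcdef, hs, show C 0 1 = lam by simp [hC]]
    field_simp
  have fA02 : v 0 ⬝ᵥ A *ᵥ v 2 = C 0 2 := by
    rw [hv0, hv2, BXe, nAlm, Matrix.zero_apply,
      show C 0 2 = 0 by simp [hC]]
  have fA03 : v 0 ⬝ᵥ A *ᵥ v 3 = C 0 3 := by
    rw [hv0, hv3, BXe, Matrix.mul_smul, nAlm, smul_zero, Matrix.zero_apply,
      show C 0 3 = 0 by simp [hC]]
  have fA12 : v 1 ⬝ᵥ A *ᵥ v 2 = C 1 2 := by
    rw [hv1, hv2, BXe, Matrix.transpose_smul, Matrix.smul_mul, Matrix.smul_mul,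
      nAlm, smul_zero, Matrix.zero_apply,
      show C 1 2 = 0 by simp [hC]]
  have fA13 : v 1 ⬝ᵥ A *ᵥ v 3 = C 1 3 := by
    rw [hv1, hv3, BXe, Matrix.transpose_smul, Matrix.smul_mul, Matrix.smul_mul,
      Matrix.mul_smul, nAlm, smul_zero, smul_zero, Matrix.zero_apply,
      show C 1 3 = 0 by simp [hC]]
  have fA23 : v 2 ⬝ᵥ A *ᵥ v 3 = C 2 3 := by
    rw [hv2, hv3, BXe, Matrix.mul_smul, nAmm, smul_smul, Matrix.smul_apply,
      smul_eq_mul, ← hcdef', hs', show C 2 3 = mu by simp [hC]]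
    field_simp
  exact ⟨Matrix.of fun a b => v b a,
    gram J4T J4T v fJ01 fJ02 fJ03 fJ12 fJ13 fJ23,
    gram hA hCskew v fA01 fA02 fA03 fA12 fA13 fA23⟩

lemma prep1 {A : Mat} (hA : Aᵀ = -A) : J4 * (-(J4 * A)) = A := by
  rw [Matrix.mul_neg, ← Matrix.mul_assoc, J4sq, neg_one_mul, neg_neg]

lemma prep2 {A : Mat} (hA : Aᵀ = -A) :
    (-(J4 * A))ᵀ * J4 = J4 * (-(J4 * A)) := by
  rw [prep1 hA, Matrix.transpose_neg, Matrix.transpose_mul, hA, J4T]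
  simp only [Matrix.neg_mul, Matrix.mul_neg, neg_neg]
  rw [Matrix.mul_assoc, J4sq, Matrix.mul_neg, Matrix.mul_one, neg_neg]

lemma scalar_case (t : ℝ) : pf4 (t • J4) = t^2 ∧ s4 (t • J4) = 2*t := by
  constructor <;>
    simp [pf4, s4, J4, Matrix.smul_apply, vecHead, vecTail] <;> ring

lemma sandwich (PB X : Mat) (hu : IsUnit PB.det) :
    (PB⁻¹)ᵀ * (PBᵀ * X * PB) * PB⁻¹ = X := by
  have hut : IsUnit (PBᵀ).det := by rw [Matrix.det_transpose]; exact hu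
  rw [Matrix.transpose_nonsing_inv]
  simp only [← Matrix.mul_assoc]
  rw [Matrix.nonsing_inv_mul _ hut, Matrix.one_mul, Matrix.mul_assoc,
    Matrix.mul_nonsing_inv _ hu, Matrix.mul_one]

lemma transfer {A B C PA PB : Mat}
    (h1 : PAᵀ * J4 * PA = J4) (h2 : PAᵀ * A * PA = C)
    (h3 : PBᵀ * J4 * PB = J4) (h4 : PBᵀ * B * PB = C) :
    ∃ P : Mat, Pᵀ * J4 * P = J4 ∧ Pᵀ * A * P = B := by
  have hQ : ((-J4) * PBᵀ * J4) * PB = 1 := by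
    have h3' := h3
    simp only [Matrix.mul_assoc] at h3' ⊢
    rw [h3', Matrix.neg_mul, J4sq, neg_neg]
  have hu : IsUnit PB.det := by
    have hd := congrArg Matrix.det hQ
    rw [Matrix.det_mul, Matrix.det_one] at hd
    exact IsUnit.of_mul_eq_one _ (by rw [mul_comm] at hd; exact hd)
  have cancel : ∀ X : Mat, (PA * PB⁻¹)ᵀ * X * (PA * PB⁻¹)
      = (PB⁻¹)ᵀ * (PAᵀ * X * PA) * PB⁻¹ := by
    intro X
    rw [Matrix.transpose_mul]
    simp only [Matrix.mul_assoc]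
  refine ⟨PA * PB⁻¹, ?_, ?_⟩
  · rw [cancel, h1, ← h3, sandwich _ _ hu]
    exact h3.symm
  · rw [cancel, h2, ← h4, sandwich _ _ hu]


theorem orbit_classification_pos (p q : ℝ) (hp : 0 < p)
    (A B : Matrix (Fin 4) (Fin 4) ℝ)
    (hA : Aᵀ = -A) (hB : Bᵀ = -B)
    (hApf : pf4 A = p) (hBpf : pf4 B = p)
    (hAs : s4 A = q) (hBs : s4 B = q)
    (hAJ : A ≠ Real.sqrt p • J4) (hAJ' : A ≠ -(Real.sqrt p) • J4)
    (hBJ : B ≠ Real.sqrt p • J4) (hBJ' : B ≠ -(Real.sqrt p) • J4) :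
    ∃ P : Matrix (Fin 4) (Fin 4) ℝ, Pᵀ * J4 * P = J4 ∧ Pᵀ * A * P = B := by
  have hJMA : J4 * (-(J4 * A)) = A := prep1 hA
  have hJMB : J4 * (-(J4 * B)) = B := prep1 hB
  have hMJA := prep2 hA
  have hMJB := prep2 hB
  have hM2A : (-(J4 * A)) * (-(J4 * A)) = q • (-(J4 * A)) - p • (1 : Mat) := by
    have := quad_identity hA
    rw [hAs, hApf] at this
    exact this
  have hM2B : (-(J4 * B)) * (-(J4 * B)) = q • (-(J4 * B)) - p • (1 : Mat) := by
    have := quad_identity hB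
    rw [hBs, hBpf] at this
    exact this
  have hMtoA : ∀ t : ℝ, -(J4 * A) = t • (1 : Mat) → A = t • J4 := fun t h => by
    rw [← hJMA, h, Matrix.mul_smul, Matrix.mul_one]
  have hMtoB : ∀ t : ℝ, -(J4 * B) = t • (1 : Mat) → B = t • J4 := fun t h => by
    rw [← hJMB, h, Matrix.mul_smul, Matrix.mul_one]
  rcases lt_trichotomy (q ^ 2) (4 * p) with hlt | heq | hgt
  · -- complex case
    set t := Real.sqrt (4 * p - q ^ 2) with htdef
    have ht : 0 < t := Real.sqrt_pos.mpr (by linarith)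
    have ht2 : t ^ 2 = 4 * p - q ^ 2 := Real.sq_sqrt (by linarith)
    obtain ⟨PA, hPA1, hPA2⟩ := case2 p q t A (-(J4 * A)) hA hJMA hMJA hM2A ht ht2
    obtain ⟨PB, hPB1, hPB2⟩ := case2 p q t B (-(J4 * B)) hB hJMB hMJB hM2B ht ht2
    exact transfer hPA1 hPA2 hPB1 hPB2
  · -- degenerate case
    have hexA : -(J4 * A) ≠ (q / 2) • (1 : Mat) := by
      intro h
      have hAeq : A = (q / 2) • J4 := hMtoA _ h
      have hs : Real.sqrt p = |q / 2| := by
        rw [show p = (q / 2) ^ 2 by nlinarith, Real.sqrt_sq_eq_abs]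
      rcases abs_cases (q / 2) with ⟨h1, _⟩ | ⟨h1, _⟩
      · exact hAJ (by rw [hAeq, hs, h1])
      · exact hAJ' (by rw [hAeq, hs, h1, neg_neg])
    have hexB : -(J4 * B) ≠ (q / 2) • (1 : Mat) := by
      intro h
      have hBeq : B = (q / 2) • J4 := hMtoB _ h
      have hs : Real.sqrt p = |q / 2| := by
        rw [show p = (q / 2) ^ 2 by nlinarith, Real.sqrt_sq_eq_abs]
      rcases abs_cases (q / 2) with ⟨h1, _⟩ | ⟨h1, _⟩
      · exact hBJ (by rw [hBeq, hs, h1])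
      · exact hBJ' (by rw [hBeq, hs, h1, neg_neg])
    obtain ⟨PA, hPA1, hPA2⟩ :=
      case3 p q A (-(J4 * A)) hA hJMA hMJA hM2A heq hexA
    obtain ⟨PB, hPB1, hPB2⟩ :=
      case3 p q B (-(J4 * B)) hB hJMB hMJB hM2B heq hexB
    exact transfer hPA1 hPA2 hPB1 hPB2
  · -- real split case
    set r := Real.sqrt (q ^ 2 - 4 * p) with hrdef
    have hr : 0 < r := Real.sqrt_pos.mpr (by linarith)
    have hr2 : r ^ 2 = q ^ 2 - 4 * p := Real.sq_sqrt (by linarith)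
    have hexAl : -(J4 * A) ≠ ((q + r) / 2) • (1 : Mat) := by
      intro h
      have hAeq := hMtoA _ h
      have h2 : s4 A = 2 * ((q + r) / 2) := by rw [hAeq]; exact (scalar_case _).2
      rw [hAs] at h2
      linarith
    have hexAm : -(J4 * A) ≠ ((q - r) / 2) • (1 : Mat) := by
      intro h
      have hAeq := hMtoA _ h
      have h2 : s4 A = 2 * ((q - r) / 2) := by rw [hAeq]; exact (scalar_case _).2
      rw [hAs] at h2
      linarith
    have hexBl : -(J4 * B) ≠ ((q + r) / 2) • (1 : Mat) := by
      intro h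
      have hBeq := hMtoB _ h
      have h2 : s4 B = 2 * ((q + r) / 2) := by rw [hBeq]; exact (scalar_case _).2
      rw [hBs] at h2
      linarith
    have hexBm : -(J4 * B) ≠ ((q - r) / 2) • (1 : Mat) := by
      intro h
      have hBeq := hMtoB _ h
      have h2 : s4 B = 2 * ((q - r) / 2) := by rw [hBeq]; exact (scalar_case _).2
      rw [hBs] at h2
      linarith
    obtain ⟨PA, hPA1, hPA2⟩ :=
      case1 p q r A (-(J4 * A)) hA hJMA hMJA hM2A hr hr2 hexAl hexAm
    obtain ⟨PB, hPB1, hPB2⟩ :=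
      case1 p q r B (-(J4 * B)) hB hJMB hMJB hM2B hr hr2 hexBl hexBm
    exact transfer hPA1 hPA2 hPB1 hPB2
end

section
/- The block-diagonal skew-symmetric matrix A = diag-blocks(a·J₀, (p/a)·J₀) with a ≠ ±√p, p > 0, is symplectically congruent to a matrix whose (1,3)-entry is nonzero. Concretely, with t = a/√p and P the explicit symplectic matrix [[1,0,0,1],[0,1/(1-t²),t²/(1-t²),0],[0,1/(1-t²),1/(1-t²),0],[t²,1,1,1]], P is symplectic and the (1,3)-entry of Pᵀ A P is nonzero. -/
open Matrix

theorem case5_matrix (p a t : ℝ) (hp : 0 < p) (ha : a ≠ 0) (ha2 : a ^ 2 ≠ p)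
    (ht : t = a / Real.sqrt p)
    (A P : Matrix (Fin 4) (Fin 4) ℝ)
    (hA : A = !![0, a, 0, 0; -a, 0, 0, 0; 0, 0, 0, p / a; 0, 0, -(p / a), 0])
    (hPdef : P = !![1, 0, 0, 1;
                    0, 1 / (1 - t ^ 2), t ^ 2 / (1 - t ^ 2), 0;
                    0, 1 / (1 - t ^ 2), 1 / (1 - t ^ 2), 0;
                    t ^ 2, 1, 1, 1]) :
    Pᵀ * J4 * P = J4 ∧ (Pᵀ * A * P) 0 2 ≠ 0 := by
  have hp0 : p ≠ 0 := ne_of_gt hp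
  have ht2 : t ^ 2 = a ^ 2 / p := by
    rw [ht, div_pow, Real.sq_sqrt hp.le]
  have hne : 1 - t ^ 2 ≠ 0 := by
    rw [ht2]
    intro h
    apply ha2
    field_simp at h
    linarith
  have hPT : Pᵀ = !![1, 0, 0, t ^ 2;
                     0, 1 / (1 - t ^ 2), 1 / (1 - t ^ 2), 1;
                     0, t ^ 2 / (1 - t ^ 2), 1 / (1 - t ^ 2), 1;
                     1, 0, 0, 1] := by
    subst hPdef
    ext i j
    fin_cases i <;> fin_cases j <;> rfl
  constructor
  · rw [hPT, hPdef]
    ext i j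
    fin_cases i <;> fin_cases j <;>
      · simp only [J4, Matrix.mul_apply, Fin.sum_univ_four, Matrix.cons_val', Matrix.cons_val_zero,
          Matrix.cons_val_one, Matrix.head_cons, Matrix.empty_val', Matrix.cons_val_fin_one,
          Matrix.head_fin_const, Matrix.of_apply, Matrix.cons_val_two, Matrix.cons_val_three,
          Matrix.tail_cons, Fin.reduceFinMk, Fin.isValue]
        try field_simp
        try ring
  · have h02 : (Pᵀ * A * P) 0 2 = -a := by
      rw [hPT, hPdef, hA]
      have h1 : p - a ^ 2 ≠ 0 := fun h => ha2 (by linarith)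
      have h2 : a * p - a ^ 3 ≠ 0 := by
        rw [show a * p - a ^ 3 = a * (p - a ^ 2) by ring]
        exact mul_ne_zero ha h1
      have h3 : -a ^ 2 + p ≠ 0 := by intro h; exact h1 (by linarith)
      simp [Matrix.mul_apply, Fin.sum_univ_four, ht2]
      field_simp
      ring
    rw [h02]
    exact neg_ne_zero.mpr ha
end

section
/- For p, q ∈ ℝ with q²/4 - p > 0 and p ≠ 0, the set {(a,b,c,d,e,f) ∈ ℝ⁶ : af - be + cd = p, a + f = q} is homeomorphic to S² × ℝ². -/
open Metric

private lemma norm_sq_e3 (x : EuclideanSpace ℝ (Fin 3)) :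
    ‖x‖ ^ 2 = x 0 ^ 2 + x 1 ^ 2 + x 2 ^ 2 := by
  rw [EuclideanSpace.norm_eq, Real.sq_sqrt (by positivity)]
  simp [Fin.sum_univ_three, Real.norm_eq_abs, sq_abs]

private noncomputable def sphereHomeo (Δ : ℝ) (hΔ : 0 < Δ) :
    {w : EuclideanSpace ℝ (Fin 3) × (ℝ × ℝ) // ‖w.1‖ ^ 2 = Δ + w.2.1 ^ 2 + w.2.2 ^ 2} ≃ₜ
      (Metric.sphere (0 : EuclideanSpace ℝ (Fin 3)) 1) × (ℝ × ℝ) where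
  toFun w := (⟨‖w.1.1‖⁻¹ • w.1.1, by
      have hx : (0:ℝ) < ‖w.1.1‖ ^ 2 := by
        rw [w.2]; positivity
      have hx' : ‖w.1.1‖ ≠ 0 := by intro h0; rw [h0] at hx; norm_num at hx
      rw [mem_sphere_zero_iff_norm, norm_smul, Real.norm_eq_abs, abs_inv, abs_norm]
      exact inv_mul_cancel₀ hx'⟩, w.1.2)
  invFun uy := ⟨(Real.sqrt (Δ + uy.2.1 ^ 2 + uy.2.2 ^ 2) • (uy.1 : EuclideanSpace ℝ (Fin 3)),
      uy.2), by
    have hnn : (0:ℝ) ≤ Δ + uy.2.1 ^ 2 + uy.2.2 ^ 2 := by positivity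
    have hu : ‖(uy.1 : EuclideanSpace ℝ (Fin 3))‖ = 1 :=
      mem_sphere_zero_iff_norm.mp uy.1.2
    simp only [norm_smul, Real.norm_eq_abs, hu, mul_one, sq_abs, Real.sq_sqrt hnn]⟩
  left_inv w := by
    have hx : (0:ℝ) < ‖w.1.1‖ ^ 2 := by rw [w.2]; positivity
    have hx' : ‖w.1.1‖ ≠ 0 := by intro h0; rw [h0] at hx; norm_num at hx
    apply Subtype.ext
    apply Prod.ext
    · show Real.sqrt (Δ + w.1.2.1 ^ 2 + w.1.2.2 ^ 2) • (‖w.1.1‖⁻¹ • w.1.1) = w.1.1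
      have : Real.sqrt (Δ + w.1.2.1 ^ 2 + w.1.2.2 ^ 2) = ‖w.1.1‖ := by
        rw [← w.2, Real.sqrt_sq (norm_nonneg _)]
      rw [this, smul_smul, mul_inv_cancel₀ hx', one_smul]
    · rfl
  right_inv uy := by
    have hnn : (0:ℝ) ≤ Δ + uy.2.1 ^ 2 + uy.2.2 ^ 2 := by positivity
    have hpos : (0:ℝ) < Δ + uy.2.1 ^ 2 + uy.2.2 ^ 2 := by positivity
    have hu : ‖(uy.1 : EuclideanSpace ℝ (Fin 3))‖ = 1 :=
      mem_sphere_zero_iff_norm.mp uy.1.2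
    have hs : (0:ℝ) < Real.sqrt (Δ + uy.2.1 ^ 2 + uy.2.2 ^ 2) := Real.sqrt_pos.mpr hpos
    apply Prod.ext
    · apply Subtype.ext
      show ‖Real.sqrt (Δ + uy.2.1 ^ 2 + uy.2.2 ^ 2) • (uy.1 : EuclideanSpace ℝ (Fin 3))‖⁻¹ •
        (Real.sqrt (Δ + uy.2.1 ^ 2 + uy.2.2 ^ 2) • (uy.1 : EuclideanSpace ℝ (Fin 3)))
          = (uy.1 : EuclideanSpace ℝ (Fin 3))
      rw [norm_smul, Real.norm_eq_abs, hu, mul_one, abs_of_pos hs, smul_smul,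
        inv_mul_cancel₀ hs.ne', one_smul]
    · rfl
  continuous_toFun := by
    apply Continuous.prodMk
    · apply Continuous.subtype_mk
      have hnorm : Continuous fun (w : {w : EuclideanSpace ℝ (Fin 3) × (ℝ × ℝ) //
          ‖w.1‖ ^ 2 = Δ + w.2.1 ^ 2 + w.2.2 ^ 2}) => ‖w.1.1‖ :=
        continuous_norm.comp (continuous_fst.comp continuous_subtype_val)
      refine (hnorm.inv₀ ?_).smul (continuous_fst.comp continuous_subtype_val)
      intro w
      have hx : (0:ℝ) < ‖w.1.1‖ ^ 2 := by rw [w.2]; positivity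
      intro h0; rw [h0] at hx; norm_num at hx
    · exact continuous_snd.comp continuous_subtype_val
  continuous_invFun := by
    apply Continuous.subtype_mk
    apply Continuous.prodMk
    · refine Continuous.smul (M := ℝ) ?_ (continuous_subtype_val.comp continuous_fst)
      exact Real.continuous_sqrt.comp (by fun_prop)
    · exact continuous_snd

theorem orbit_shape_pos (p q : ℝ) (hp : p ≠ 0) (hΔ : 0 < q ^ 2 / 4 - p) :
    Nonempty
      ({v : Fin 6 → ℝ // v 0 * v 5 - v 1 * v 4 + v 2 * v 3 = p ∧ v 0 + v 5 = q} ≃ₜ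
        (Metric.sphere (0 : EuclideanSpace ℝ (Fin 3)) 1) × (ℝ × ℝ)) := by
  set Δ := q ^ 2 / 4 - p with hΔdef
  let F : (Fin 6 → ℝ) → EuclideanSpace ℝ (Fin 3) × (ℝ × ℝ) := fun v =>
    ((WithLp.equiv 2 (Fin 3 → ℝ)).symm ![v 0 - q/2, (v 1 + v 4)/2, (v 2 - v 3)/2],
     ((v 1 - v 4)/2, (v 2 + v 3)/2))
  let G : EuclideanSpace ℝ (Fin 3) × (ℝ × ℝ) → (Fin 6 → ℝ) := fun w =>
    ![q/2 + w.1 0, w.1 1 + w.2.1, w.2.2 + w.1 2, w.2.2 - w.1 2, w.1 1 - w.2.1, q/2 - w.1 0]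
  have hF1 : ∀ v, (F v).1 0 = v 0 - q/2 := fun v => rfl
  have hF2 : ∀ v, (F v).1 1 = (v 1 + v 4)/2 := fun v => rfl
  have hF3 : ∀ v, (F v).1 2 = (v 2 - v 3)/2 := fun v => rfl
  have homeo1 : {v : Fin 6 → ℝ // v 0 * v 5 - v 1 * v 4 + v 2 * v 3 = p ∧ v 0 + v 5 = q} ≃ₜ
      {w : EuclideanSpace ℝ (Fin 3) × (ℝ × ℝ) // ‖w.1‖ ^ 2 = Δ + w.2.1 ^ 2 + w.2.2 ^ 2} := by
    have hcoord : ∀ i : Fin 3, Continuous fun x : EuclideanSpace ℝ (Fin 3) => x i :=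
      fun i => (continuous_apply i).comp (PiLp.continuous_ofLp 2 fun _ : Fin 3 => ℝ)
    have hFc : Continuous F := by
      apply Continuous.prodMk
      · refine (PiLp.continuous_toLp 2 fun _ : Fin 3 => ℝ).comp ?_
        apply continuous_pi
        intro i
        fin_cases i
        · exact (continuous_apply 0).sub continuous_const
        · exact ((continuous_apply 1).add (continuous_apply 4)).div_const 2
        · exact ((continuous_apply 2).sub (continuous_apply 3)).div_const 2
      · exact (((continuous_apply 1).sub (continuous_apply 4)).div_const 2).prodMk
          (((continuous_apply 2).add (continuous_apply 3)).div_const 2)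
    have hGc : Continuous G := by
      apply continuous_pi
      intro i
      fin_cases i
      · exact continuous_const.add ((hcoord 0).comp continuous_fst)
      · exact ((hcoord 1).comp continuous_fst).add (continuous_fst.comp continuous_snd)
      · exact (continuous_snd.comp continuous_snd).add ((hcoord 2).comp continuous_fst)
      · exact (continuous_snd.comp continuous_snd).sub ((hcoord 2).comp continuous_fst)
      · exact ((hcoord 1).comp continuous_fst).sub (continuous_fst.comp continuous_snd)
      · exact continuous_const.sub ((hcoord 0).comp continuous_fst)
    have memF : ∀ v : {v : Fin 6 → ℝ // v 0 * v 5 - v 1 * v 4 + v 2 * v 3 = p ∧ v 0 + v 5 = q},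
        ‖(F v.1).1‖ ^ 2 = Δ + (F v.1).2.1 ^ 2 + (F v.1).2.2 ^ 2 := by
      rintro ⟨v, h1, h2⟩
      rw [norm_sq_e3, hF1, hF2, hF3]
      show (v 0 - q/2)^2 + ((v 1 + v 4)/2)^2 + ((v 2 - v 3)/2)^2
        = Δ + ((v 1 - v 4)/2)^2 + ((v 2 + v 3)/2)^2
      rw [hΔdef]
      linear_combination (-1 : ℝ) * h1 + (v 0) * h2
    have memG : ∀ w : {w : EuclideanSpace ℝ (Fin 3) × (ℝ × ℝ) //
          ‖w.1‖ ^ 2 = Δ + w.2.1 ^ 2 + w.2.2 ^ 2},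
        G w.1 0 * G w.1 5 - G w.1 1 * G w.1 4 + G w.1 2 * G w.1 3 = p ∧
          G w.1 0 + G w.1 5 = q := by
      rintro ⟨w, h⟩
      rw [norm_sq_e3] at h
      constructor
      · show (q/2 + w.1 0) * (q/2 - w.1 0) - (w.1 1 + w.2.1) * (w.1 1 - w.2.1)
          + (w.2.2 + w.1 2) * (w.2.2 - w.1 2) = p
        rw [hΔdef] at h
        linear_combination (-1 : ℝ) * h
      · show (q/2 + w.1 0) + (q/2 - w.1 0) = q
        ring
    refine ⟨⟨fun v => ⟨F v.1, memF v⟩, fun w => ⟨G w.1, memG w⟩, ?_, ?_⟩,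
      (hFc.comp continuous_subtype_val).subtype_mk memF,
      (hGc.comp continuous_subtype_val).subtype_mk memG⟩
    · rintro ⟨v, h1, h2⟩
      apply Subtype.ext
      funext i
      fin_cases i
      · show q/2 + (v 0 - q/2) = v 0; ring
      · show (v 1 + v 4)/2 + (v 1 - v 4)/2 = v 1; ring
      · show (v 2 + v 3)/2 + (v 2 - v 3)/2 = v 2; ring
      · show (v 2 + v 3)/2 - (v 2 - v 3)/2 = v 3; ring
      · show (v 1 + v 4)/2 - (v 1 - v 4)/2 = v 4; ring
      · show q/2 - (v 0 - q/2) = v 5; linarith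
    · rintro ⟨w, h⟩
      apply Subtype.ext
      apply Prod.ext
      · ext i
        fin_cases i
        · show (q/2 + w.1 0) - q/2 = w.1 0; ring
        · show ((w.1 1 + w.2.1) + (w.1 1 - w.2.1))/2 = w.1 1; ring
        · show ((w.2.2 + w.1 2) - (w.2.2 - w.1 2))/2 = w.1 2; ring
      · apply Prod.ext
        · show ((w.1 1 + w.2.1) - (w.1 1 - w.2.1))/2 = w.2.1; ring
        · show ((w.2.2 + w.1 2) + (w.2.2 - w.1 2))/2 = w.2.2; ring
  exact ⟨homeo1.trans (sphereHomeo Δ hΔ)⟩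
end

section
/- For p, q ∈ ℝ with q²/4 - p < 0, the set {(a,b,c,d,e,f) ∈ ℝ⁶ : af - be + cd = p, a + f = q} is homeomorphic to (ℝ² \ {0}) × ℝ². -/
open Real

noncomputable def nzed (z : ℝ × ℝ) : ℝ := Real.sqrt (z.1 ^ 2 + z.2 ^ 2)

noncomputable def uu (z : ℝ × ℝ) : ℝ := Real.log (nzed z)

noncomputable def rr (p q : ℝ) (z w : ℝ × ℝ) : ℝ :=
  Real.sqrt (uu z ^ 2 + w.1 ^ 2 + w.2 ^ 2 + (p - q ^ 2 / 4))

noncomputable def fwdMap (v : Fin 6 → ℝ) : (ℝ × ℝ) × ℝ × ℝ :=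
  ((Real.exp ((v 0 - v 5) / 2) * ((v 1 - v 4) / 2) /
      Real.sqrt (((v 1 - v 4) / 2) ^ 2 + ((v 2 + v 3) / 2) ^ 2),
    Real.exp ((v 0 - v 5) / 2) * ((v 2 + v 3) / 2) /
      Real.sqrt (((v 1 - v 4) / 2) ^ 2 + ((v 2 + v 3) / 2) ^ 2)),
   ((v 1 + v 4) / 2, (v 2 - v 3) / 2))

noncomputable def bwdMap (p q : ℝ) (z w : ℝ × ℝ) : Fin 6 → ℝ :=
  ![q / 2 + uu z,
    w.1 + rr p q z w * z.1 / nzed z,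
    rr p q z w * z.2 / nzed z + w.2,
    rr p q z w * z.2 / nzed z - w.2,
    w.1 - rr p q z w * z.1 / nzed z,
    q / 2 - uu z]

lemma bwdMap_apply0 (p q : ℝ) (z w : ℝ × ℝ) : bwdMap p q z w 0 = q / 2 + uu z := rfl
lemma bwdMap_apply1 (p q : ℝ) (z w : ℝ × ℝ) :
    bwdMap p q z w 1 = w.1 + rr p q z w * z.1 / nzed z := rfl
lemma bwdMap_apply2 (p q : ℝ) (z w : ℝ × ℝ) :
    bwdMap p q z w 2 = rr p q z w * z.2 / nzed z + w.2 := rfl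
lemma bwdMap_apply3 (p q : ℝ) (z w : ℝ × ℝ) :
    bwdMap p q z w 3 = rr p q z w * z.2 / nzed z - w.2 := rfl
lemma bwdMap_apply4 (p q : ℝ) (z w : ℝ × ℝ) :
    bwdMap p q z w 4 = w.1 - rr p q z w * z.1 / nzed z := rfl
lemma bwdMap_apply5 (p q : ℝ) (z w : ℝ × ℝ) : bwdMap p q z w 5 = q / 2 - uu z := rfl

lemma zpos (z : ℝ × ℝ) (hz : z ≠ 0) : 0 < z.1 ^ 2 + z.2 ^ 2 := by
  rcases eq_or_ne z.1 0 with h1 | h1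
  · rcases eq_or_ne z.2 0 with h2 | h2
    · exact absurd (Prod.ext h1 h2) hz
    · positivity
  · positivity

lemma nzed_pos (z : ℝ × ℝ) (hz : z ≠ 0) : 0 < nzed z := Real.sqrt_pos.2 (zpos z hz)

lemma nzed_sq (z : ℝ × ℝ) (hz : z ≠ 0) : nzed z ^ 2 = z.1 ^ 2 + z.2 ^ 2 :=
  Real.sq_sqrt (zpos z hz).le

lemma rr_pos (p q : ℝ) (hp : 0 < p - q ^ 2 / 4) (z w : ℝ × ℝ) : 0 < rr p q z w := by
  apply Real.sqrt_pos.2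
  nlinarith [sq_nonneg (uu z), sq_nonneg w.1, sq_nonneg w.2]

lemma rr_sq (p q : ℝ) (hp : 0 < p - q ^ 2 / 4) (z w : ℝ × ℝ) :
    rr p q z w ^ 2 = uu z ^ 2 + w.1 ^ 2 + w.2 ^ 2 + (p - q ^ 2 / 4) := by
  apply Real.sq_sqrt
  nlinarith [sq_nonneg (uu z), sq_nonneg w.1, sq_nonneg w.2]

-- key identity on the level set
lemma keyId (p q : ℝ) (v : Fin 6 → ℝ)
    (h1 : v 0 * v 5 - v 1 * v 4 + v 2 * v 3 = p) (h2 : v 0 + v 5 = q) :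
    ((v 1 - v 4) / 2) ^ 2 + ((v 2 + v 3) / 2) ^ 2 =
      ((v 0 - v 5) / 2) ^ 2 + ((v 1 + v 4) / 2) ^ 2 + ((v 2 - v 3) / 2) ^ 2 + (p - q ^ 2 / 4) := by
  have h3 : q ^ 2 = (v 0 + v 5) ^ 2 := by rw [h2]
  nlinarith [h1, h3]

lemma keyPos (p q : ℝ) (hp : 0 < p - q ^ 2 / 4) (v : Fin 6 → ℝ)
    (h1 : v 0 * v 5 - v 1 * v 4 + v 2 * v 3 = p) (h2 : v 0 + v 5 = q) :
    0 < ((v 1 - v 4) / 2) ^ 2 + ((v 2 + v 3) / 2) ^ 2 := by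
  rw [keyId p q v h1 h2]
  nlinarith [sq_nonneg ((v 0 - v 5) / 2), sq_nonneg ((v 1 + v 4) / 2), sq_nonneg ((v 2 - v 3) / 2)]

lemma bwd_mem (p q : ℝ) (hp : 0 < p - q ^ 2 / 4) (z : ℝ × ℝ) (hz : z ≠ 0) (w : ℝ × ℝ) :
    bwdMap p q z w 0 * bwdMap p q z w 5 - bwdMap p q z w 1 * bwdMap p q z w 4 +
      bwdMap p q z w 2 * bwdMap p q z w 3 = p ∧ bwdMap p q z w 0 + bwdMap p q z w 5 = q := by
  have hnz := nzed_pos z hz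
  have hnz2 := nzed_sq z hz
  have hr2 := rr_sq p q hp z w
  constructor
  · rw [bwdMap_apply0, bwdMap_apply1, bwdMap_apply2, bwdMap_apply3, bwdMap_apply4,
      bwdMap_apply5]
    have hsum : (rr p q z w * z.1 / nzed z) ^ 2 + (rr p q z w * z.2 / nzed z) ^ 2
        = rr p q z w ^ 2 := by
      field_simp
      nlinarith [hnz2]
    linear_combination hsum + hr2
  · rw [bwdMap_apply0, bwdMap_apply5]; ring

lemma left_calc (p q : ℝ) (hp : 0 < p - q ^ 2 / 4) (v : Fin 6 → ℝ)
    (h1 : v 0 * v 5 - v 1 * v 4 + v 2 * v 3 = p) (h2 : v 0 + v 5 = q) :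
    bwdMap p q (fwdMap v).1 (fwdMap v).2 = v := by
  have hkey := keyId p q v h1 h2
  have hP := keyPos p q hp v h1 h2
  set u := (v 0 - v 5) / 2 with hu_def
  set s := (v 1 + v 4) / 2 with hs_def
  set t := (v 1 - v 4) / 2 with ht_def
  set m := (v 2 + v 3) / 2 with hm_def
  set n := (v 2 - v 3) / 2 with hn_def
  set r := Real.sqrt (t ^ 2 + m ^ 2) with hr_def
  have hr : 0 < r := Real.sqrt_pos.2 hP
  have hr2 : r ^ 2 = t ^ 2 + m ^ 2 := Real.sq_sqrt hP.le
  have hE : (0 : ℝ) < Real.exp u := Real.exp_pos u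
  have hz1 : (fwdMap v).1 = (Real.exp u * t / r, Real.exp u * m / r) := rfl
  have hz2 : (fwdMap v).2 = (s, n) := rfl
  have hsum : (Real.exp u * t / r) ^ 2 + (Real.exp u * m / r) ^ 2 = Real.exp u ^ 2 := by
    field_simp
    nlinarith [hr2]
  have hnzed : nzed (fwdMap v).1 = Real.exp u := by
    rw [hz1]; unfold nzed; dsimp only
    rw [hsum]
    exact Real.sqrt_sq hE.le
  have huu : uu (fwdMap v).1 = u := by rw [uu, hnzed, Real.log_exp]
  have hrr : rr p q (fwdMap v).1 (fwdMap v).2 = r := by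
    rw [rr, huu, hz2]; dsimp only
    rw [hr_def]
    congr 1
    linarith [hkey]
  funext i
  fin_cases i
  · rw [show (⟨0, by norm_num⟩ : Fin 6) = (0 : Fin 6) from rfl, bwdMap_apply0, huu]
    rw [hu_def]; linarith
  · rw [show (⟨1, by norm_num⟩ : Fin 6) = (1 : Fin 6) from rfl, bwdMap_apply1, hrr, hnzed, hz1, hz2]
    dsimp only
    field_simp
    rw [hs_def, ht_def]; ring
  · rw [show (⟨2, by norm_num⟩ : Fin 6) = (2 : Fin 6) from rfl, bwdMap_apply2, hrr, hnzed, hz1, hz2]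
    dsimp only
    field_simp
    rw [hm_def, hn_def]; ring
  · rw [show (⟨3, by norm_num⟩ : Fin 6) = (3 : Fin 6) from rfl, bwdMap_apply3, hrr, hnzed, hz1, hz2]
    dsimp only
    field_simp
    rw [hm_def, hn_def]; ring
  · rw [show (⟨4, by norm_num⟩ : Fin 6) = (4 : Fin 6) from rfl, bwdMap_apply4, hrr, hnzed, hz1, hz2]
    dsimp only
    field_simp
    rw [hs_def, ht_def]; ring
  · rw [show (⟨5, by norm_num⟩ : Fin 6) = (5 : Fin 6) from rfl, bwdMap_apply5, huu]
    rw [hu_def]; linarith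

lemma right_calc (p q : ℝ) (hp : 0 < p - q ^ 2 / 4) (z : ℝ × ℝ) (hz : z ≠ 0) (w : ℝ × ℝ) :
    fwdMap (bwdMap p q z w) = (z, w) := by
  have hnz := nzed_pos z hz
  have hnz2 := nzed_sq z hz
  have hr := rr_pos p q hp z w
  have hr2 := rr_sq p q hp z w
  set N := nzed z with hN_def
  set U := uu z with hU_def
  set R := rr p q z w with hR_def
  have heU : Real.exp U = N := by rw [hU_def, uu, Real.exp_log hnz]
  have hv0 : bwdMap p q z w 0 = q / 2 + U := rfl
  have hv5 : bwdMap p q z w 5 = q / 2 - U := rfl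
  have hv1 : bwdMap p q z w 1 = w.1 + R * z.1 / N := rfl
  have hv4 : bwdMap p q z w 4 = w.1 - R * z.1 / N := rfl
  have hv2 : bwdMap p q z w 2 = R * z.2 / N + w.2 := rfl
  have hv3 : bwdMap p q z w 3 = R * z.2 / N - w.2 := rfl
  have hu' : (bwdMap p q z w 0 - bwdMap p q z w 5) / 2 = U := by rw [hv0, hv5]; ring
  have ht' : (bwdMap p q z w 1 - bwdMap p q z w 4) / 2 = R * z.1 / N := by rw [hv1, hv4]; ring
  have hm' : (bwdMap p q z w 2 + bwdMap p q z w 3) / 2 = R * z.2 / N := by rw [hv2, hv3]; ring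
  have hs' : (bwdMap p q z w 1 + bwdMap p q z w 4) / 2 = w.1 := by rw [hv1, hv4]; ring
  have hn' : (bwdMap p q z w 2 - bwdMap p q z w 3) / 2 = w.2 := by rw [hv2, hv3]; ring
  have hsum : (R * z.1 / N) ^ 2 + (R * z.2 / N) ^ 2 = R ^ 2 := by
    field_simp
    nlinarith [hnz2]
  have hroot : Real.sqrt ((R * z.1 / N) ^ 2 + (R * z.2 / N) ^ 2) = R := by
    rw [hsum]; exact Real.sqrt_sq hr.le
  unfold fwdMap
  rw [hu', ht', hm', hs', hn', hroot, heU, Prod.ext_iff, Prod.ext_iff, Prod.ext_iff]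
  refine ⟨⟨?_, ?_⟩, rfl, rfl⟩ <;> · dsimp only; field_simp

lemma fwd_ne (p q : ℝ) (hp : 0 < p - q ^ 2 / 4) (v : Fin 6 → ℝ)
    (h1 : v 0 * v 5 - v 1 * v 4 + v 2 * v 3 = p) (h2 : v 0 + v 5 = q) :
    (fwdMap v).1 ≠ 0 := by
  intro hc
  have hP := keyPos p q hp v h1 h2
  have hr : 0 < Real.sqrt (((v 1 - v 4) / 2) ^ 2 + ((v 2 + v 3) / 2) ^ 2) := Real.sqrt_pos.2 hP
  rw [Prod.ext_iff] at hc
  obtain ⟨hc1, hc2⟩ := hc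
  simp only [fwdMap] at hc1 hc2
  have hE : Real.exp ((v 0 - v 5) / 2) ≠ 0 := (Real.exp_pos _).ne'
  have ht : (v 1 - v 4) / 2 = 0 := by
    rcases div_eq_zero_iff.1 hc1 with h | h
    · rcases mul_eq_zero.1 h with h' | h'
      · exact absurd h' hE
      · exact h'
    · exact absurd h hr.ne'
  have hm : (v 2 + v 3) / 2 = 0 := by
    rcases div_eq_zero_iff.1 hc2 with h | h
    · rcases mul_eq_zero.1 h with h' | h'
      · exact absurd h' hE
      · exact h'
    · exact absurd h hr.ne'
  rw [ht, hm] at hP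
  simp at hP

theorem orbit_shape_neg_disc (p q : ℝ) (hΔ : q ^ 2 / 4 - p < 0) :
    Nonempty
      ({v : Fin 6 → ℝ // v 0 * v 5 - v 1 * v 4 + v 2 * v 3 = p ∧ v 0 + v 5 = q} ≃ₜ
        ({z : ℝ × ℝ // z ≠ 0} × (ℝ × ℝ))) := by
  have hp : 0 < p - q ^ 2 / 4 := by linarith
  refine ⟨{
    toFun := fun x => (⟨(fwdMap x.1).1, fwd_ne p q hp x.1 x.2.1 x.2.2⟩, (fwdMap x.1).2),
    invFun := fun y => ⟨bwdMap p q y.1.1 y.2, bwd_mem p q hp y.1.1 y.1.2 y.2⟩,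
    left_inv := fun x => Subtype.ext (left_calc p q hp x.1 x.2.1 x.2.2),
    right_inv := fun y => by
      obtain ⟨⟨z, hzne⟩, w⟩ := y
      have h := right_calc p q hp z hzne w
      simp only [Prod.mk.injEq, Subtype.mk.injEq]
      exact ⟨congrArg Prod.fst h, congrArg Prod.snd h⟩,
    continuous_toFun := ?_,
    continuous_invFun := ?_ }⟩
  · -- forward continuity
    have hcoord : ∀ i : Fin 6,
        Continuous fun x : {v : Fin 6 → ℝ // v 0 * v 5 - v 1 * v 4 + v 2 * v 3 = p ∧ v 0 + v 5 = q} =>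
          x.1 i := fun i => (continuous_apply i).comp continuous_subtype_val
    have cu := (((hcoord 0).sub (hcoord 5)).div_const 2)
    have cs := (((hcoord 1).add (hcoord 4)).div_const 2)
    have ct := (((hcoord 1).sub (hcoord 4)).div_const 2)
    have cm := (((hcoord 2).add (hcoord 3)).div_const 2)
    have cn := (((hcoord 2).sub (hcoord 3)).div_const 2)
    have crden := Real.continuous_sqrt.comp ((ct.pow 2).add (cm.pow 2))
    have hden : ∀ x : {v : Fin 6 → ℝ // v 0 * v 5 - v 1 * v 4 + v 2 * v 3 = p ∧ v 0 + v 5 = q},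
        Real.sqrt (((x.1 1 - x.1 4) / 2) ^ 2 + ((x.1 2 + x.1 3) / 2) ^ 2) ≠ 0 :=
      fun x => (Real.sqrt_pos.2 (keyPos p q hp x.1 x.2.1 x.2.2)).ne'
    have cE := Real.continuous_exp.comp cu
    exact Continuous.prodMk
      (Continuous.subtype_mk
        (Continuous.prodMk ((cE.mul ct).div crden hden) ((cE.mul cm).div crden hden)) _)
      (Continuous.prodMk cs cn)
  · -- backward continuity
    refine Continuous.subtype_mk ?_ _
    have cz1 : Continuous fun y : {z : ℝ × ℝ // z ≠ 0} × (ℝ × ℝ) => (y.1 : ℝ × ℝ).1 :=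
      (continuous_fst.comp continuous_subtype_val).comp continuous_fst
    have cz2 : Continuous fun y : {z : ℝ × ℝ // z ≠ 0} × (ℝ × ℝ) => (y.1 : ℝ × ℝ).2 :=
      (continuous_snd.comp continuous_subtype_val).comp continuous_fst
    have cw1 : Continuous fun y : {z : ℝ × ℝ // z ≠ 0} × (ℝ × ℝ) => y.2.1 :=
      continuous_fst.comp continuous_snd
    have cw2 : Continuous fun y : {z : ℝ × ℝ // z ≠ 0} × (ℝ × ℝ) => y.2.2 :=
      continuous_snd.comp continuous_snd
    have cN : Continuous fun y : {z : ℝ × ℝ // z ≠ 0} × (ℝ × ℝ) => nzed (y.1 : ℝ × ℝ) :=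
      Real.continuous_sqrt.comp ((cz1.pow 2).add (cz2.pow 2))
    have hNpos : ∀ y : {z : ℝ × ℝ // z ≠ 0} × (ℝ × ℝ), 0 < nzed (y.1 : ℝ × ℝ) :=
      fun y => nzed_pos _ y.1.2
    have cU : Continuous fun y : {z : ℝ × ℝ // z ≠ 0} × (ℝ × ℝ) => uu (y.1 : ℝ × ℝ) :=
      Real.continuousOn_log.comp_continuous cN (fun y => by simpa using (hNpos y).ne')
    have cR : Continuous fun y : {z : ℝ × ℝ // z ≠ 0} × (ℝ × ℝ) => rr p q (y.1 : ℝ × ℝ) y.2 :=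
      Real.continuous_sqrt.comp
        ((((cU.pow 2).add (cw1.pow 2)).add (cw2.pow 2)).add continuous_const)
    have hNne : ∀ y : {z : ℝ × ℝ // z ≠ 0} × (ℝ × ℝ), nzed (y.1 : ℝ × ℝ) ≠ 0 :=
      fun y => (hNpos y).ne'
    refine continuous_pi fun i => ?_
    fin_cases i
    · exact continuous_const.add cU
    · exact cw1.add ((cR.mul cz1).div cN hNne)
    · exact ((cR.mul cz2).div cN hNne).add cw2
    · exact ((cR.mul cz2).div cN hNne).sub cw2
    · exact cw1.sub ((cR.mul cz1).div cN hNne)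
    · exact continuous_const.sub cU
end

section
/- For Δ ∈ ℝ with Δ > 0, the map f : D² × ℝ² → D_Δ given by f(x,y,z,w) = (x√(z²+w²+Δ)+z, w+y√(z²+w²+Δ), w−y√(z²+w²+Δ), x√(z²+w²+Δ)−z) is a homeomorphism, where D² is the closed unit disk and D_Δ = {(b,c,d,e) ∈ ℝ⁴ : be − cd ≤ Δ}. -/
noncomputable def diskFwd (Δ : ℝ) (p : {x : ℝ × ℝ // x.1 ^ 2 + x.2 ^ 2 ≤ 1} × (ℝ × ℝ)) :
    Fin 4 → ℝ :=
  ![p.1.1.1 * Real.sqrt (p.2.1 ^ 2 + p.2.2 ^ 2 + Δ) + p.2.1,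
    p.2.2 + p.1.1.2 * Real.sqrt (p.2.1 ^ 2 + p.2.2 ^ 2 + Δ),
    p.2.2 - p.1.1.2 * Real.sqrt (p.2.1 ^ 2 + p.2.2 ^ 2 + Δ),
    p.1.1.1 * Real.sqrt (p.2.1 ^ 2 + p.2.2 ^ 2 + Δ) - p.2.1]

noncomputable def diskS (Δ : ℝ) (v : Fin 4 → ℝ) : ℝ :=
  Real.sqrt (((v 0 - v 3) / 2) ^ 2 + ((v 1 + v 2) / 2) ^ 2 + Δ)

theorem disk_homeomorphism (Δ : ℝ) (hΔ : 0 < Δ) :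
    ∃ e : ({x : ℝ × ℝ // x.1 ^ 2 + x.2 ^ 2 ≤ 1} × (ℝ × ℝ)) ≃ₜ
        {v : Fin 4 → ℝ // v 0 * v 3 - v 1 * v 2 ≤ Δ},
      ∀ (x : {x : ℝ × ℝ // x.1 ^ 2 + x.2 ^ 2 ≤ 1}) (z : ℝ × ℝ),
        (e (x, z) : Fin 4 → ℝ) =
          ![x.1.1 * Real.sqrt (z.1 ^ 2 + z.2 ^ 2 + Δ) + z.1,
            z.2 + x.1.2 * Real.sqrt (z.1 ^ 2 + z.2 ^ 2 + Δ),
            z.2 - x.1.2 * Real.sqrt (z.1 ^ 2 + z.2 ^ 2 + Δ),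
            x.1.1 * Real.sqrt (z.1 ^ 2 + z.2 ^ 2 + Δ) - z.1] := by
  have hpos : ∀ z₁ z₂ : ℝ, (0:ℝ) < z₁ ^ 2 + z₂ ^ 2 + Δ := fun z₁ z₂ => by positivity
  have hspos : ∀ z₁ z₂ : ℝ, 0 < Real.sqrt (z₁ ^ 2 + z₂ ^ 2 + Δ) := fun z₁ z₂ =>
    Real.sqrt_pos.2 (hpos z₁ z₂)
  have hssq : ∀ z₁ z₂ : ℝ, (Real.sqrt (z₁ ^ 2 + z₂ ^ 2 + Δ)) ^ 2 = z₁ ^ 2 + z₂ ^ 2 + Δ :=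
    fun z₁ z₂ => Real.sq_sqrt (le_of_lt (hpos z₁ z₂))
  have hSpos : ∀ v : Fin 4 → ℝ, 0 < diskS Δ v := fun v =>
    Real.sqrt_pos.2 (by positivity)
  have hSsq : ∀ v : Fin 4 → ℝ,
      (diskS Δ v) ^ 2 = ((v 0 - v 3) / 2) ^ 2 + ((v 1 + v 2) / 2) ^ 2 + Δ := fun v =>
    Real.sq_sqrt (by positivity)
  -- forward map lands in target
  have hmemF : ∀ p : {x : ℝ × ℝ // x.1 ^ 2 + x.2 ^ 2 ≤ 1} × (ℝ × ℝ),
      diskFwd Δ p 0 * diskFwd Δ p 3 - diskFwd Δ p 1 * diskFwd Δ p 2 ≤ Δ := by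
    rintro ⟨⟨⟨x₁, x₂⟩, hx⟩, z₁, z₂⟩
    simp only [diskFwd, Matrix.cons_val_zero, Matrix.cons_val_one, Matrix.head_cons,
      Matrix.cons_val_two, Matrix.tail_cons, Matrix.cons_val_three]
    have h1 := hssq z₁ z₂
    have h2 := hpos z₁ z₂
    nlinarith [sq_nonneg (Real.sqrt (z₁ ^ 2 + z₂ ^ 2 + Δ))]
  -- inverse map
  set g : {v : Fin 4 → ℝ // v 0 * v 3 - v 1 * v 2 ≤ Δ} →
      ({x : ℝ × ℝ // x.1 ^ 2 + x.2 ^ 2 ≤ 1} × (ℝ × ℝ)) := fun v =>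
    (⟨((v.1 0 + v.1 3) / (2 * diskS Δ v.1), (v.1 1 - v.1 2) / (2 * diskS Δ v.1)), by
      rcases v with ⟨v, hv⟩
      have hS := hSpos v
      have hS2 := hSsq v
      rw [div_pow, div_pow, ← add_div, div_le_one (by positivity)]
      nlinarith [hS, hS2, hv]⟩,
     ((v.1 0 - v.1 3) / 2, (v.1 1 + v.1 2) / 2))
  refine ⟨⟨⟨fun p => ⟨diskFwd Δ p, hmemF p⟩, g, ?_, ?_⟩, ?_, ?_⟩, ?_⟩
  · -- left inverse
    rintro ⟨⟨⟨x₁, x₂⟩, hx⟩, z₁, z₂⟩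
    set s := Real.sqrt (z₁ ^ 2 + z₂ ^ 2 + Δ) with hsdef
    have hS : diskS Δ
        ![x₁ * s + z₁, z₂ + x₂ * s, z₂ - x₂ * s, x₁ * s - z₁] = s := by
      simp only [diskS, Matrix.cons_val_zero, Matrix.cons_val_one, Matrix.head_cons,
        Matrix.cons_val_two, Matrix.tail_cons, Matrix.cons_val_three, hsdef]
      congr 1
      ring
    have hs : 0 < s := hspos z₁ z₂
    simp only [g, diskFwd, Matrix.cons_val_zero, Matrix.cons_val_one, Matrix.head_cons,
      Matrix.cons_val_two, Matrix.tail_cons, Matrix.cons_val_three, Prod.mk.injEq,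
      Subtype.mk.injEq]
    rw [hS, ← hsdef]
    refine ⟨⟨?_, ?_⟩, ?_, ?_⟩ <;> field_simp <;> ring
  · -- right inverse
    rintro ⟨v, hv⟩
    have hS := hSpos v
    have h0 : ((v 0 - v 3) / 2) ^ 2 + ((v 1 + v 2) / 2) ^ 2 + Δ =
        ((v 0 - v 3) / 2) ^ 2 + ((v 1 + v 2) / 2) ^ 2 + Δ := rfl
    apply Subtype.ext
    simp only [g, diskFwd]
    have hSeq : Real.sqrt (((v 0 - v 3) / 2) ^ 2 + ((v 1 + v 2) / 2) ^ 2 + Δ) = diskS Δ v := rfl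
    have e0 : v ⟨0, by norm_num⟩ = v 0 := rfl
    have e1 : v ⟨1, by norm_num⟩ = v 1 := rfl
    have e2 : v ⟨2, by norm_num⟩ = v 2 := rfl
    have e3 : v ⟨3, by norm_num⟩ = v 3 := rfl
    funext i
    fin_cases i <;>
      simp only [Matrix.cons_val_zero, Matrix.cons_val_one, Matrix.head_cons,
        Matrix.cons_val_two, Matrix.tail_cons, Matrix.cons_val_three, hSeq, e0, e1, e2, e3, Fin.isValue, Matrix.cons_val, Fin.reduceFinMk] <;>
      field_simp <;> ring
  · -- continuity of forward
    apply Continuous.subtype_mk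
    apply continuous_pi
    intro i
    have hsqrt : Continuous fun p : {x : ℝ × ℝ // x.1 ^ 2 + x.2 ^ 2 ≤ 1} × (ℝ × ℝ) =>
        Real.sqrt (p.2.1 ^ 2 + p.2.2 ^ 2 + Δ) := by
      apply Real.continuous_sqrt.comp; fun_prop
    have h1 : Continuous fun p : {x : ℝ × ℝ // x.1 ^ 2 + x.2 ^ 2 ≤ 1} × (ℝ × ℝ) =>
        p.1.1.1 := by fun_prop
    have h2 : Continuous fun p : {x : ℝ × ℝ // x.1 ^ 2 + x.2 ^ 2 ≤ 1} × (ℝ × ℝ) =>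
        p.1.1.2 := by fun_prop
    have h3 : Continuous fun p : {x : ℝ × ℝ // x.1 ^ 2 + x.2 ^ 2 ≤ 1} × (ℝ × ℝ) =>
        p.2.1 := by fun_prop
    have h4 : Continuous fun p : {x : ℝ × ℝ // x.1 ^ 2 + x.2 ^ 2 ≤ 1} × (ℝ × ℝ) =>
        p.2.2 := by fun_prop
    fin_cases i
    · exact (h1.mul hsqrt).add h3
    · exact h4.add (h2.mul hsqrt)
    · exact h4.sub (h2.mul hsqrt)
    · exact (h1.mul hsqrt).sub h3
  · -- continuity of inverse
    have hv : ∀ i : Fin 4, Continuous fun v : {v : Fin 4 → ℝ // v 0 * v 3 - v 1 * v 2 ≤ Δ} =>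
        v.1 i := fun i => (continuous_apply i).comp continuous_subtype_val
    have hScont : Continuous fun v : {v : Fin 4 → ℝ // v 0 * v 3 - v 1 * v 2 ≤ Δ} =>
        diskS Δ v.1 := by
      apply Real.continuous_sqrt.comp
      exact (((((hv 0).sub (hv 3)).div_const 2).pow 2).add
        ((((hv 1).add (hv 2)).div_const 2).pow 2)).add continuous_const
    have hSne : ∀ v : {v : Fin 4 → ℝ // v 0 * v 3 - v 1 * v 2 ≤ Δ},
        2 * diskS Δ v.1 ≠ 0 := fun v => by
      have := hSpos v.1; positivity
    refine Continuous.prodMk (Continuous.subtype_mk ?_ _) ?_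
    · exact Continuous.prodMk
        (((hv 0).add (hv 3)).div (continuous_const.mul hScont) hSne)
        (((hv 1).sub (hv 2)).div (continuous_const.mul hScont) hSne)
    · exact Continuous.prodMk (((hv 0).sub (hv 3)).div_const 2)
        (((hv 1).add (hv 2)).div_const 2)
  · intro x z
    rfl
end
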